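/- arXiv:1502.07290 — 4 statements merged into one kernel-verified Lean document; each statement's English description precedes it below -/
import Mathlib

section
/- For every t with a < t ≤ b, the nonnegative normalized minimizer is unique: if u₁ and u₂ both lie in H¹₀((a,t)), satisfy ∫_a^t uᵢ(x)² dx = 1, uᵢ ≥ 0 on (a,t), and ∫_a^t ((uᵢ'(x))² + V(x) uᵢ(x)²) dx = λ(t) for i = 1,2, then u₁ = u₂ almost everywhere on (a,t). -/
open MeasureTheory Set

/-- Membership in the Sobolev space `H¹₀((a,t))`: `u` is continuous on `[a,t]`,
has derivative `u'` on `(a,t)` with `u'` square-integrable, and vanishes at both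
endpoints. -/
def MemH10 (a t : ℝ) (u u' : ℝ → ℝ) : Prop :=
  ContinuousOn u (Set.Icc a t) ∧
  (∀ x ∈ Set.Ioo a t, HasDerivAt u (u' x) x) ∧
  IntervalIntegrable (fun x => (u' x) ^ 2) volume a t ∧
  u a = 0 ∧ u t = 0

/-- The ground state energy
`λ(t) = inf { ∫_a^t ((u')² + V u²) : u ∈ H¹₀((a,t)), ∫_a^t u² = 1 }`. -/
noncomputable def groundStateEnergy (a : ℝ) (V : ℝ → ℝ) (t : ℝ) : ℝ :=
  sInf { E : ℝ | ∃ u u' : ℝ → ℝ, MemH10 a t u u' ∧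
    (∫ x in a..t, (u x) ^ 2) = 1 ∧
    E = ∫ x in a..t, ((u' x) ^ 2 + V x * (u x) ^ 2) }

namespace GSU

variable {a t x : ℝ} {V u u' v v' f : ℝ → ℝ}

lemma ae_Ioo (hat : a ≤ t) : ∀ᵐ x ∂(volume.restrict (Ioc a t)), x ∈ Ioo a t := by
  have h1 : ∀ᵐ x ∂(volume.restrict (Ioc a t)), x ≠ t :=
    ae_restrict_of_ae (by simp [ae_iff, Classical.not_not, measure_singleton])
  filter_upwards [h1, ae_restrict_mem measurableSet_Ioc] with x hx hx2
  exact ⟨hx2.1, lt_of_le_of_ne hx2.2 hx⟩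

/-- a.e. strong measurability of the weak derivative on `Ioc a t`. -/
lemma aesm_deriv (h : MemH10 a t u u') (hat : a ≤ t) :
    AEStronglyMeasurable u' (volume.restrict (Ioc a t)) := by
  refine (measurable_deriv u).aestronglyMeasurable.congr ?_
  filter_upwards [ae_Ioo hat] with x hx
  exact ((h.2.1 x hx).deriv)

lemma abs_le_sq (x : ℝ) : |x| ≤ (1 + x ^ 2) / 2 := by
  nlinarith [sq_nonneg (|x| - 1), sq_abs x, abs_nonneg x]

/-- the weak derivative is integrable. -/
lemma deriv_integrable (h : MemH10 a t u u') (hat : a ≤ t) :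
    IntervalIntegrable u' volume a t := by
  rw [intervalIntegrable_iff_integrableOn_Ioc_of_le hat]
  refine Integrable.mono' (g := fun x => (1 + (u' x) ^ 2) / 2) ?_ (aesm_deriv h hat) ?_
  · have h2 := (intervalIntegrable_iff_integrableOn_Ioc_of_le hat).mp h.2.2.1
    exact ((integrable_const (1:ℝ)).add h2).div_const 2
  · exact Filter.Eventually.of_forall fun x => by
      simpa [Real.norm_eq_abs] using abs_le_sq (u' x)

/-- product of two weak derivatives is integrable. -/
lemma deriv_mul_integrable (h : MemH10 a t u u') (h2 : MemH10 a t v v') (hat : a ≤ t) :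
    IntervalIntegrable (fun x => u' x * v' x) volume a t := by
  rw [intervalIntegrable_iff_integrableOn_Ioc_of_le hat]
  refine Integrable.mono' (g := fun x => ((u' x) ^ 2 + (v' x) ^ 2) / 2) ?_
    ((aesm_deriv h hat).mul (aesm_deriv h2 hat)) ?_
  · have ha := (intervalIntegrable_iff_integrableOn_Ioc_of_le hat).mp h.2.2.1
    have hb := (intervalIntegrable_iff_integrableOn_Ioc_of_le hat).mp h2.2.2.1
    exact (ha.add hb).div_const 2
  · exact Filter.Eventually.of_forall fun x => by
      rw [Real.norm_eq_abs, abs_mul]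
      nlinarith [sq_nonneg (|u' x| - |v' x|), sq_abs (u' x), sq_abs (v' x),
        abs_nonneg (u' x), abs_nonneg (v' x)]

lemma cont_intervalIntegrable {f : ℝ → ℝ} (hf : ContinuousOn f (Icc a t)) (hat : a ≤ t) :
    IntervalIntegrable f volume a t := by
  apply ContinuousOn.intervalIntegrable
  rwa [uIcc_of_le hat]

/-- integrability of `V u v` for continuous-on-Icc functions. -/
lemma Vuv_integrable (hV : ContinuousOn V (Icc a t)) (hu : ContinuousOn u (Icc a t))
    (hv : ContinuousOn v (Icc a t)) (hat : a ≤ t) :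
    IntervalIntegrable (fun x => V x * (u x * v x)) volume a t :=
  cont_intervalIntegrable (hV.mul (hu.mul hv)) hat


lemma MemH10_add (hat : a ≤ t) (h : MemH10 a t u u') (h2 : MemH10 a t v v') :
    MemH10 a t (u + v) (u' + v') := by
  refine ⟨h.1.add h2.1, fun x hx => (h.2.1 x hx).add (h2.2.1 x hx), ?_, by
    simp [h.2.2.2.1, h2.2.2.2.1], by simp [h.2.2.2.2, h2.2.2.2.2]⟩
  rw [intervalIntegrable_iff_integrableOn_Ioc_of_le hat]
  have hm : AEStronglyMeasurable (fun x => u' x + v' x) (volume.restrict (Ioc a t)) :=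
    (aesm_deriv h hat).add (aesm_deriv h2 hat)
  refine Integrable.mono' (g := fun x => 2 * ((u' x)^2 + (v' x)^2)) ?_ ?_ ?_
  · have ha := (intervalIntegrable_iff_integrableOn_Ioc_of_le hat).mp h.2.2.1
    have hb := (intervalIntegrable_iff_integrableOn_Ioc_of_le hat).mp h2.2.2.1
    exact (ha.add hb).const_mul 2
  · have := hm.mul hm
    apply this.congr
    filter_upwards [] with x
    simp [Pi.add_apply, pow_two]
  · exact Filter.Eventually.of_forall fun x => by
      rw [Real.norm_eq_abs, Pi.add_apply, abs_of_nonneg (sq_nonneg _)]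
      show (u' x + v' x) ^ 2 ≤ 2 * ((u' x) ^ 2 + (v' x) ^ 2)
      nlinarith [sq_nonneg (u' x - v' x)]

lemma MemH10_smul (h : MemH10 a t u u') (c : ℝ) :
    MemH10 a t (fun x => c * u x) (fun x => c * u' x) := by
  refine ⟨h.1.const_smul c, fun x hx => (h.2.1 x hx).const_mul c, ?_, by
    simp [h.2.2.2.1], by simp [h.2.2.2.2]⟩
  have : IntervalIntegrable (fun x => c^2 * (u' x)^2) volume a t := h.2.2.1.const_mul _
  simpa [mul_pow] using this


/-- energy integrand is interval integrable -/
lemma en_integrable (hV : ContinuousOn V (Icc a t)) (h : MemH10 a t u u') (hat : a ≤ t) :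
    IntervalIntegrable (fun x => (u' x) ^ 2 + V x * (u x) ^ 2) volume a t :=
  h.2.2.1.add (cont_intervalIntegrable (hV.mul (h.1.pow 2)) hat)

lemma bilin_integrable (hV : ContinuousOn V (Icc a t)) (h : MemH10 a t u u')
    (h2 : MemH10 a t v v') (hat : a ≤ t) :
    IntervalIntegrable (fun x => u' x * v' x + V x * (u x * v x)) volume a t :=
  (deriv_mul_integrable h h2 hat).add (cont_intervalIntegrable (hV.mul (h.1.mul h2.1)) hat)

/-- The set of admissible energies is bounded below. -/
lemma bddBelow_S (hat : a ≤ t) {M : ℝ} (hM : ∀ x ∈ Icc a t, |V x| ≤ M)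
    (hVc : ContinuousOn V (Icc a t)) :
    BddBelow { E : ℝ | ∃ u u' : ℝ → ℝ, MemH10 a t u u' ∧
      (∫ x in a..t, (u x) ^ 2) = 1 ∧
      E = ∫ x in a..t, ((u' x) ^ 2 + V x * (u x) ^ 2) } := by
  refine ⟨-M, fun E hE => ?_⟩
  obtain ⟨w, w', hw, hn, rfl⟩ := hE
  have h1 : IntervalIntegrable (fun x => V x * (w x) ^ 2) volume a t :=
    cont_intervalIntegrable (hVc.mul (hw.1.pow 2)) hat
  have hsplit : (∫ x in a..t, ((w' x) ^ 2 + V x * (w x) ^ 2))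
      = (∫ x in a..t, (w' x) ^ 2) + ∫ x in a..t, V x * (w x) ^ 2 :=
    intervalIntegral.integral_add hw.2.2.1 h1
  have h2 : (0:ℝ) ≤ ∫ x in a..t, (w' x) ^ 2 :=
    intervalIntegral.integral_nonneg hat (fun x _ => sq_nonneg _)
  have h3 : (∫ x in a..t, (-M) * (w x) ^ 2) ≤ ∫ x in a..t, V x * (w x) ^ 2 := by
    refine intervalIntegral.integral_mono_on hat
      (((cont_intervalIntegrable (hw.1.pow 2) hat)).const_mul _) h1 (fun x hx => ?_)
    have := hM x hx
    nlinarith [sq_nonneg (w x), abs_le.mp this]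
  have h4 : (∫ x in a..t, (-M) * (w x) ^ 2) = -M := by
    rw [intervalIntegral.integral_const_mul, hn, mul_one]
  linarith

/-- fundamental inequality : energy of any H10 function dominates λ times its norm. -/
lemma energy_ge (hat : a < t) {M : ℝ} (hM : ∀ x ∈ Icc a t, |V x| ≤ M)
    (hVc : ContinuousOn V (Icc a t)) (hw : MemH10 a t u u')
    (hNpos : 0 < (∫ x in a..t, (u x) ^ 2)) :
    groundStateEnergy a V t * (∫ x in a..t, (u x) ^ 2)
      ≤ ∫ x in a..t, ((u' x) ^ 2 + V x * (u x) ^ 2) := by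
  set N := (∫ x in a..t, (u x) ^ 2) with hN
  set c := (Real.sqrt N)⁻¹ with hc
  have hcN : c ^ 2 * N = 1 := by
    rw [hc, inv_pow, Real.sq_sqrt hNpos.le]
    field_simp
  have hmem : (c ^ 2 * ∫ x in a..t, ((u' x) ^ 2 + V x * (u x) ^ 2)) ∈
      { E : ℝ | ∃ u u' : ℝ → ℝ, MemH10 a t u u' ∧ (∫ x in a..t, (u x) ^ 2) = 1 ∧
        E = ∫ x in a..t, ((u' x) ^ 2 + V x * (u x) ^ 2) } := by
    refine ⟨fun x => c * u x, fun x => c * u' x, MemH10_smul hw c, ?_, ?_⟩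
    · have : (∫ x in a..t, (c * u x) ^ 2) = c ^ 2 * N := by
        rw [hN, ← intervalIntegral.integral_const_mul]
        exact intervalIntegral.integral_congr (fun x _ => by ring)
      rw [this, hcN]
    · rw [← intervalIntegral.integral_const_mul]
      exact (intervalIntegral.integral_congr (fun x _ => by ring)).symm
  have hle : groundStateEnergy a V t ≤ c ^ 2 * ∫ x in a..t, ((u' x) ^ 2 + V x * (u x) ^ 2) :=
    csInf_le (bddBelow_S hat.le hM hVc) hmem
  have hc2 : 0 < c ^ 2 := by
    have : 0 < Real.sqrt N := Real.sqrt_pos.mpr hNpos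
    positivity
  calc groundStateEnergy a V t * N
      ≤ (c ^ 2 * ∫ x in a..t, ((u' x) ^ 2 + V x * (u x) ^ 2)) * N := by
        apply mul_le_mul_of_nonneg_right hle hNpos.le
    _ = (c ^ 2 * N) * ∫ x in a..t, ((u' x) ^ 2 + V x * (u x) ^ 2) := by ring
    _ = _ := by rw [hcN, one_mul]


lemma energy_expand (hat : a ≤ t) (hVc : ContinuousOn V (Icc a t))
    (h : MemH10 a t u u') (h2 : MemH10 a t v v') (ε : ℝ) :
    (∫ x in a..t, ((u' x + ε * v' x) ^ 2 + V x * (u x + ε * v x) ^ 2))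
      = (∫ x in a..t, ((u' x) ^ 2 + V x * (u x) ^ 2))
        + (2 * ε) * (∫ x in a..t, (u' x * v' x + V x * (u x * v x)))
        + ε ^ 2 * (∫ x in a..t, ((v' x) ^ 2 + V x * (v x) ^ 2)) := by
  have key : (∫ x in a..t, ((u' x + ε * v' x) ^ 2 + V x * (u x + ε * v x) ^ 2))
      = ∫ x in a..t, (((u' x) ^ 2 + V x * (u x) ^ 2)
        + ((2 * ε) * (u' x * v' x + V x * (u x * v x))
        + ε ^ 2 * ((v' x) ^ 2 + V x * (v x) ^ 2))) :=
    intervalIntegral.integral_congr (fun x _ => by ring)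
  rw [key, intervalIntegral.integral_add (en_integrable hVc h hat)
    (((bilin_integrable hVc h h2 hat).const_mul _).add
      ((en_integrable hVc h2 hat).const_mul _)),
    intervalIntegral.integral_add ((bilin_integrable hVc h h2 hat).const_mul _)
      ((en_integrable hVc h2 hat).const_mul _),
    intervalIntegral.integral_const_mul, intervalIntegral.integral_const_mul]
  ring

lemma norm_expand (hat : a ≤ t) (h : MemH10 a t u u') (h2 : MemH10 a t v v') (ε : ℝ) :
    (∫ x in a..t, (u x + ε * v x) ^ 2)
      = (∫ x in a..t, (u x) ^ 2) + (2 * ε) * (∫ x in a..t, u x * v x)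
        + ε ^ 2 * (∫ x in a..t, (v x) ^ 2) := by
  have key : (∫ x in a..t, (u x + ε * v x) ^ 2)
      = ∫ x in a..t, ((u x) ^ 2 + ((2 * ε) * (u x * v x) + ε ^ 2 * (v x) ^ 2)) :=
    intervalIntegral.integral_congr (fun x _ => by ring)
  rw [key, intervalIntegral.integral_add (cont_intervalIntegrable (f := fun x => (u x) ^ 2) (h.1.pow 2) hat)
    (((cont_intervalIntegrable (f := fun x => u x * v x) (h.1.mul h2.1) hat).const_mul _).add
      ((cont_intervalIntegrable (f := fun x => (v x) ^ 2) (h2.1.pow 2) hat).const_mul _)),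
    intervalIntegral.integral_add ((cont_intervalIntegrable (f := fun x => u x * v x) (h.1.mul h2.1) hat).const_mul _)
      ((cont_intervalIntegrable (f := fun x => (v x) ^ 2) (h2.1.pow 2) hat).const_mul _),
    intervalIntegral.integral_const_mul, intervalIntegral.integral_const_mul]
  ring

lemma eq_zero_of_quad {c r δ : ℝ} (hδ : 0 < δ)
    (h : ∀ ε : ℝ, |ε| < δ → 0 ≤ 2 * ε * c + ε ^ 2 * r) : c = 0 := by
  by_contra hc
  set m := min (δ / 2) (|c| / (|r| + 1)) with hm
  have hr1 : (0:ℝ) < |r| + 1 := by positivity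
  have hmpos : 0 < m := lt_min (by linarith) (div_pos (abs_pos.mpr hc) hr1)
  have hmδ : m < δ := lt_of_le_of_lt (min_le_left _ _) (by linarith)
  have hmc : m * (|r| + 1) ≤ |c| := by
    rw [hm]
    calc min (δ / 2) (|c| / (|r| + 1)) * (|r| + 1) ≤ (|c| / (|r| + 1)) * (|r| + 1) := by
          apply mul_le_mul_of_nonneg_right (min_le_right _ _) hr1.le
      _ = |c| := by field_simp
  rcases lt_or_gt_of_ne hc with hneg | hpos
  · -- c < 0 : take ε = m
    have habs : |c| = -c := abs_of_neg hneg
    have := h m (by rw [abs_of_pos hmpos]; exact hmδ)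
    have hrle : r ≤ |r| := le_abs_self r
    nlinarith [mul_le_mul_of_nonneg_left hmc hmpos.le, sq_nonneg m]
  · have habs : |c| = c := abs_of_pos hpos
    have := h (-m) (by rw [abs_neg, abs_of_pos hmpos]; exact hmδ)
    have hrle : r ≤ |r| := le_abs_self r
    nlinarith [mul_le_mul_of_nonneg_left hmc hmpos.le, sq_nonneg m]

/-- Weak Euler–Lagrange equation for a minimizer. -/
lemma weak_EL (hat : a < t) {M : ℝ} (hM : ∀ x ∈ Icc a t, |V x| ≤ M)
    (hVc : ContinuousOn V (Icc a t)) (h : MemH10 a t u u')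
    (hn : (∫ x in a..t, (u x) ^ 2) = 1)
    (hmin : (∫ x in a..t, ((u' x) ^ 2 + V x * (u x) ^ 2)) = groundStateEnergy a V t)
    (h2 : MemH10 a t v v') :
    (∫ x in a..t, (u' x * v' x + V x * (u x * v x)))
      = groundStateEnergy a V t * (∫ x in a..t, u x * v x) := by
  set lam := groundStateEnergy a V t with hlam
  set s := (∫ x in a..t, u x * v x) with hs
  set n := (∫ x in a..t, (v x) ^ 2) with hn2
  set B := (∫ x in a..t, (u' x * v' x + V x * (u x * v x))) with hB
  set r := (∫ x in a..t, ((v' x) ^ 2 + V x * (v x) ^ 2)) with hr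
  have hn0 : 0 ≤ n := intervalIntegral.integral_nonneg hat.le (fun x _ => sq_nonneg _)
  set δ := min 1 (1 / (2 * |s| + n + 1)) with hδdef
  have hδ : 0 < δ := lt_min one_pos (by positivity)
  suffices hkey : B - lam * s = 0 by linarith
  apply eq_zero_of_quad (r := r - lam * n) hδ
  intro ε hε
  -- the perturbed function
  have hmem : MemH10 a t (u + fun x => ε * v x) (u' + fun x => ε * v' x) :=
    MemH10_add hat.le h (MemH10_smul h2 ε)
  have hNval : (∫ x in a..t, ((u + fun x => ε * v x) x) ^ 2) = 1 + 2 * ε * s + ε ^ 2 * n := by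
    have : (∫ x in a..t, ((u + fun x => ε * v x) x) ^ 2)
        = (∫ x in a..t, (u x + ε * v x) ^ 2) := by rfl
    rw [this, norm_expand hat.le h h2 ε, hn]
  have habsε : |ε| ≤ 1 := le_of_lt (lt_of_lt_of_le hε (min_le_left _ _))
  have hεsn : |ε| * (2 * |s| + n) < 1 := by
    rcases eq_or_lt_of_le (by positivity : (0:ℝ) ≤ 2 * |s| + n) with hz | hz
    · rw [← hz]; simp
    · have h1 : |ε| < 1 / (2 * |s| + n + 1) := lt_of_lt_of_le hε (min_le_right _ _)
      have h2' : (0:ℝ) < 2 * |s| + n + 1 := by positivity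
      calc |ε| * (2 * |s| + n) < (1 / (2 * |s| + n + 1)) * (2 * |s| + n) :=
            mul_lt_mul_of_pos_right h1 hz
        _ ≤ 1 := by rw [div_mul_eq_mul_div, div_le_one h2']; linarith
  have hNpos : 0 < 1 + 2 * ε * s + ε ^ 2 * n := by
    have h1 : -(2 * ε * s) ≤ 2 * |ε| * |s| := by
      calc -(2 * ε * s) ≤ |2 * ε * s| := neg_le_abs _
        _ = 2 * |ε| * |s| := by rw [abs_mul, abs_mul, abs_two]
    have h2' : 0 ≤ ε ^ 2 * n := by positivity
    nlinarith [mul_nonneg (abs_nonneg ε) hn0]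
  have hge := energy_ge hat hM hVc hmem (by rw [hNval]; exact hNpos)
  have hQval : (∫ x in a..t, (((u' + fun x => ε * v' x) x) ^ 2
        + V x * ((u + fun x => ε * v x) x) ^ 2))
      = lam + 2 * ε * B + ε ^ 2 * r := by
    have : (∫ x in a..t, (((u' + fun x => ε * v' x) x) ^ 2
        + V x * ((u + fun x => ε * v x) x) ^ 2))
        = (∫ x in a..t, ((u' x + ε * v' x) ^ 2 + V x * (u x + ε * v x) ^ 2)) := by rfl
    rw [this, energy_expand hat.le hVc h h2 ε, hmin]
  rw [hNval, hQval] at hge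
  nlinarith [hge]


noncomputable def clamp (a t : ℝ) : ℝ → ℝ := fun x => max a (min x t)

lemma continuous_clamp : Continuous (clamp a t) :=
  continuous_const.max (continuous_id.min continuous_const)

lemma clamp_mem (hat : a ≤ t) (x : ℝ) : clamp a t x ∈ Icc a t :=
  ⟨le_max_left _ _, max_le hat (min_le_right _ _)⟩

lemma clamp_eq (hx : x ∈ Icc a t) : clamp a t x = x := by
  rcases hx with ⟨h1, h2⟩
  simp [clamp, min_eq_left h2, max_eq_right h1]

lemma ext_continuous (hat : a ≤ t) (hu : ContinuousOn f (Icc a t)) :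
    Continuous (f ∘ clamp a t) :=
  hu.comp_continuous continuous_clamp (clamp_mem hat)

/-- interval integral equals the global integral for functions supported in `Ioo a t`. -/
lemma interval_eq_global (hat : a ≤ t) (h0 : ∀ x ∉ Ioo a t, f x = 0) :
    (∫ x in a..t, f x) = ∫ x, f x := by
  rw [intervalIntegral.integral_of_le hat, integral_Ioc_eq_integral_Ioo]
  exact setIntegral_eq_integral_of_forall_compl_eq_zero fun x hx => h0 x hx

/-- `u' * f` is interval integrable for `f` continuous on `[a,t]`. -/
lemma deriv_mul_cont_integrable (h : MemH10 a t u u') (hf : ContinuousOn f (Icc a t))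
    (hat : a ≤ t) : IntervalIntegrable (fun x => u' x * f x) volume a t := by
  obtain ⟨C, hC⟩ := isCompact_Icc.exists_bound_of_continuousOn hf
  rw [intervalIntegrable_iff_integrableOn_Ioc_of_le hat]
  refine Integrable.mono' (g := fun x => C * |u' x|) ?_
    ((aesm_deriv h hat).mul ((hf.mono Ioc_subset_Icc_self).aestronglyMeasurable
      measurableSet_Ioc)) ?_
  · exact (((intervalIntegrable_iff_integrableOn_Ioc_of_le hat).mp
      (deriv_integrable h hat)).abs).const_mul C
  · refine (ae_restrict_iff' measurableSet_Ioc).mpr (Filter.Eventually.of_forall fun x hx => ?_)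
    rw [Real.norm_eq_abs, abs_mul]
    have h1 : |f x| ≤ C := by simpa [Real.norm_eq_abs] using hC x (Ioc_subset_Icc_self hx)
    have := abs_nonneg (u' x)
    calc |u' x| * |f x| ≤ |u' x| * C := by
          exact mul_le_mul_of_nonneg_left h1 this
      _ = C * |u' x| := by ring

/-- C¹ functions with compact support in `Ioo a t` are in `H¹₀`. -/
lemma memH10_of_C1 (hat : a < t) {φ φ' : ℝ → ℝ} (hd : ∀ x, HasDerivAt φ (φ' x) x)
    (hc : Continuous φ') (hsupp : tsupport φ ⊆ Ioo a t) : MemH10 a t φ φ' := by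
  have hφc : Continuous φ := by
    rw [continuous_iff_continuousAt]; exact fun x => (hd x).continuousAt
  refine ⟨hφc.continuousOn, fun x _ => hd x, ?_, ?_, ?_⟩
  · exact ((hc.pow 2).continuousOn).intervalIntegrable
  · exact image_eq_zero_of_notMem_tsupport (fun hm => (lt_irrefl a (hsupp hm).1))
  · exact image_eq_zero_of_notMem_tsupport (fun hm => (lt_irrefl t (hsupp hm).2))


/-- Elliptic regularity for minimizers: `u'` agrees on `(a,t)` with a globally continuous
function and satisfies `u'' = (V - λ) u` there. -/
lemma minimizer_regular (hat : a < t) {M : ℝ} (hM : ∀ x ∈ Icc a t, |V x| ≤ M)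
    (hVc : ContinuousOn V (Icc a t)) (h : MemH10 a t u u')
    (hn : (∫ x in a..t, (u x) ^ 2) = 1)
    (hmin : (∫ x in a..t, ((u' x) ^ 2 + V x * (u x) ^ 2)) = groundStateEnergy a V t) :
    ∃ D : ℝ → ℝ, Continuous D ∧ (∀ x ∈ Ioo a t, u' x = D x) ∧
      ∀ x ∈ Ioo a t, HasDerivAt u' ((V x - groundStateEnergy a V t) * u x) x := by
  set lam := groundStateEnergy a V t with hlam
  set W := V ∘ clamp a t with hWdef
  set U := u ∘ clamp a t with hUdef
  have hWc : Continuous W := ext_continuous hat.le hVc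
  have hUc : Continuous U := ext_continuous hat.le h.1
  set g := fun x => (W x - lam) * U x with hgdef
  have hgc : Continuous g := (hWc.sub continuous_const).mul hUc
  have hgV : ∀ x ∈ Icc a t, g x = (V x - lam) * u x := fun x hx => by
    simp only [hgdef, hWdef, hUdef, Function.comp_apply, clamp_eq hx]
  set G := fun x => ∫ s in a..x, g s with hGdef
  have hG : ∀ x, HasDerivAt G (g x) x := fun x =>
    (hgc.integral_hasStrictDerivAt a x).hasDerivAt
  have hGc : Continuous G := continuous_iff_continuousAt.mpr fun x => (hG x).continuousAt
  -- integrability of (u' - G) * f for continuous f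
  have hintUG : ∀ f : ℝ → ℝ, Continuous f →
      IntervalIntegrable (fun x => (u' x - G x) * f x) volume a t := by
    intro f hf
    have he : (fun x => (u' x - G x) * f x) = fun x => u' x * f x - G x * f x :=
      funext fun x => by ring
    rw [he]
    exact (deriv_mul_cont_integrable h hf.continuousOn hat.le).sub
      (cont_intervalIntegrable ((hGc.mul hf).continuousOn) hat.le)
  -- Step 1 : ∫ (u' - G) φ' = 0 for C¹ test functions φ
  have key1 : ∀ φ φ' : ℝ → ℝ, (∀ x, HasDerivAt φ (φ' x) x) → Continuous φ' →
      tsupport φ ⊆ Ioo a t → (∫ x in a..t, (u' x - G x) * φ' x) = 0 := by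
    intro φ φ' hd hc hsupp
    have hφmem := memH10_of_C1 hat hd hc hsupp
    have hEL := weak_EL hat hM hVc h hn hmin hφmem
    have hφa : φ a = 0 := hφmem.2.2.2.1
    have hφt : φ t = 0 := hφmem.2.2.2.2
    have hsplit : (∫ x in a..t, (u' x * φ' x + V x * (u x * φ x)))
        = (∫ x in a..t, u' x * φ' x) + ∫ x in a..t, V x * (u x * φ x) :=
      intervalIntegral.integral_add (deriv_mul_integrable h hφmem hat.le)
        (cont_intervalIntegrable (hVc.mul (h.1.mul hφmem.1)) hat.le)
    have hparts : (∫ x in a..t, G x * φ' x) = - ∫ x in a..t, g x * φ x := by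
      have hh := intervalIntegral.integral_mul_deriv_eq_deriv_mul
        (u := G) (v := φ) (u' := g) (v' := φ')
        (fun x _ => hG x) (fun x _ => hd x)
        (hgc.intervalIntegrable a t) (hc.intervalIntegrable a t)
      rw [hh, hφt, hφa]; ring
    have hgφ : (∫ x in a..t, g x * φ x)
        = (∫ x in a..t, V x * (u x * φ x)) - lam * ∫ x in a..t, u x * φ x := by
      have h1 : (∫ x in a..t, g x * φ x)
          = ∫ x in a..t, (V x * (u x * φ x) - lam * (u x * φ x)) :=
        intervalIntegral.integral_congr fun x hx => by
          rw [hgV x (by rwa [uIcc_of_le hat.le] at hx)]; ring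
      rw [h1, intervalIntegral.integral_sub
        (cont_intervalIntegrable (f := fun x => V x * (u x * φ x)) (hVc.mul (h.1.mul hφmem.1)) hat.le)
        ((cont_intervalIntegrable (f := fun x => u x * φ x) (h.1.mul hφmem.1) hat.le).const_mul _),
        intervalIntegral.integral_const_mul]
    have hsub : (∫ x in a..t, (u' x - G x) * φ' x)
        = (∫ x in a..t, u' x * φ' x) - ∫ x in a..t, G x * φ' x := by
      have he : (fun x => (u' x - G x) * φ' x) = fun x => u' x * φ' x - G x * φ' x :=
        funext fun x => by ring
      rw [he]
      exact intervalIntegral.integral_sub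
        (deriv_mul_cont_integrable h hc.continuousOn hat.le)
        (cont_intervalIntegrable ((hGc.mul hc).continuousOn) hat.le)
    rw [hsub, hparts, hgφ]
    rw [hsplit] at hEL
    linarith
  -- Step 2 : the bump function
  set x₀ := (a + t) / 2 with hx₀def
  have hx₀m : x₀ ∈ Ioo a t := ⟨by simp only [hx₀def]; linarith, by simp only [hx₀def]; linarith⟩
  have h8 : (0:ℝ) < (t - a) / 8 := by linarith
  set bump : ContDiffBump x₀ := ⟨(t - a) / 8, (t - a) / 4, h8, by linarith⟩ with hbumpdef
  set ψ₀ := bump.normed volume with hψ₀def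
  have hψ₀c : Continuous ψ₀ := bump.continuous_normed
  have hψ₀supp : tsupport ψ₀ ⊆ Ioo a t := by
    rw [hψ₀def, bump.tsupport_normed_eq, Real.closedBall_eq_Icc]
    intro y hy
    obtain ⟨hy1, hy2⟩ : x₀ - (t - a) / 4 ≤ y ∧ y ≤ x₀ + (t - a) / 4 := hy
    constructor
    · simp only [hx₀def] at hy1 ⊢; linarith
    · simp only [hx₀def] at hy2 ⊢; linarith
  have hψ₀cpt : HasCompactSupport ψ₀ := bump.hasCompactSupport_normed
  have hIψ₀ : (∫ x in a..t, ψ₀ x) = 1 := by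
    rw [interval_eq_global hat.le
      (fun x hx => image_eq_zero_of_notMem_tsupport (fun hm => hx (hψ₀supp hm)))]
    exact bump.integral_normed
  set c₀ := ∫ x in a..t, (u' x - G x) * ψ₀ x with hc₀def
  -- Step 3 : ∫ ψ (u' - G - c₀) = 0 for all smooth ψ compactly supported in (a,t)
  have key2 : ∀ ψ : ℝ → ℝ, Continuous ψ → HasCompactSupport ψ → tsupport ψ ⊆ Ioo a t →
      (∫ x in a..t, ψ x * (u' x - G x - c₀)) = 0 := by
    intro ψ hψc hψcpt hψsupp
    set Iψ := ∫ x in a..t, ψ x with hIψdef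
    set θ := fun x => ψ x - Iψ * ψ₀ x with hθdef
    have hθc : Continuous θ := hψc.sub (continuous_const.mul hψ₀c)
    set φ := fun x => ∫ s in a..x, θ s with hφdef
    have hdφ : ∀ x, HasDerivAt φ (θ x) x := fun x =>
      (hθc.integral_hasStrictDerivAt a x).hasDerivAt
    set K := tsupport ψ ∪ tsupport ψ₀ with hKdef
    have hKcpt : IsCompact K := hψcpt.union hψ₀cpt
    have hKsub : K ⊆ Ioo a t := union_subset hψsupp hψ₀supp
    have hKne : K.Nonempty := ⟨x₀, Or.inr (by
      rw [hψ₀def, bump.tsupport_normed_eq]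
      exact Metric.mem_closedBall_self (by show (0:ℝ) ≤ (t - a) / 4; linarith))⟩
    set c := sInf K with hcdef
    set d := sSup K with hddef
    have hcK : c ∈ K := hKcpt.sInf_mem hKne
    have hdK : d ∈ K := hKcpt.sSup_mem hKne
    have hcd : Icc c d ⊆ Ioo a t := fun y hy =>
      ⟨lt_of_lt_of_le (hKsub hcK).1 hy.1, lt_of_le_of_lt hy.2 (hKsub hdK).2⟩
    have hKIcc : K ⊆ Icc c d := fun y hy =>
      ⟨csInf_le hKcpt.bddBelow hy, le_csSup hKcpt.bddAbove hy⟩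
    have hθ0 : ∀ s, s ∉ Icc c d → θ s = 0 := by
      intro s hs
      have h1 : ψ s = 0 :=
        image_eq_zero_of_notMem_tsupport (fun hm => hs (hKIcc (Or.inl hm)))
      have h2 : ψ₀ s = 0 :=
        image_eq_zero_of_notMem_tsupport (fun hm => hs (hKIcc (Or.inr hm)))
      simp [hθdef, h1, h2]
    have hφt : φ t = 0 := by
      have : φ t = Iψ - Iψ * (∫ x in a..t, ψ₀ x) := by
        rw [hφdef]
        show (∫ s in a..t, (ψ s - Iψ * ψ₀ s)) = _
        rw [intervalIntegral.integral_sub (hψc.intervalIntegrable a t)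
          ((hψ₀c.intervalIntegrable a t).const_mul _),
          intervalIntegral.integral_const_mul]
      rw [this, hIψ₀]; ring
    have hφsupp : tsupport φ ⊆ Ioo a t := by
      refine subset_trans (closure_minimal ?_ isClosed_Icc) hcd
      intro y hy
      simp only [Function.mem_support, ne_eq] at hy
      by_contra hyn
      apply hy
      rcases not_and_or.mp (mem_Icc.not.mp hyn) with h1 | h1
      · -- y < c
        push_neg at h1
        have : φ y = ∫ s in a..y, (0:ℝ) := by
          apply intervalIntegral.integral_congr
          intro s hs
          apply hθ0
          intro hsm
          have hac : a < c := (hKsub hcK).1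
          have : s ≤ max a y := (hs.2 : s ≤ max a y)
          have : s < c := lt_of_le_of_lt this (max_lt hac h1)
          exact absurd hsm.1 (not_le.mpr this)
        simpa using this
      · -- d < y
        push_neg at h1
        have hdt : d < t := (hKsub hdK).2
        have hadd : φ y = φ t + ∫ s in t..y, θ s := by
          rw [hφdef]
          exact (intervalIntegral.integral_add_adjacent_intervals
            (hθc.intervalIntegrable a t) (hθc.intervalIntegrable t y)).symm
        have hz : (∫ s in t..y, θ s) = ∫ s in t..y, (0:ℝ) := by
          apply intervalIntegral.integral_congr
          intro s hs
          apply hθ0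
          intro hsm
          have : min t y ≤ s := hs.1
          have hds : d < s := lt_of_lt_of_le (lt_min hdt h1) this
          exact absurd hsm.2 (not_le.mpr hds)
        rw [hadd, hφt, hz]; simp
    have h0 := key1 φ θ hdφ hθc hφsupp
    have hexp : (∫ x in a..t, (u' x - G x) * θ x)
        = (∫ x in a..t, (u' x - G x) * ψ x) - Iψ * c₀ := by
      have h1 : (∫ x in a..t, (u' x - G x) * θ x)
          = ∫ x in a..t, ((u' x - G x) * ψ x - Iψ * ((u' x - G x) * ψ₀ x)) :=
        intervalIntegral.integral_congr fun x _ => by simp only [hθdef]; ring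
      rw [h1, intervalIntegral.integral_sub (hintUG ψ hψc)
        ((hintUG ψ₀ hψ₀c).const_mul _), intervalIntegral.integral_const_mul, hc₀def]
    have hIψc₀ : (∫ x in a..t, (u' x - G x) * ψ x) = Iψ * c₀ := by
      rw [hexp] at h0; linarith
    have hfin : (∫ x in a..t, ψ x * (u' x - G x - c₀))
        = (∫ x in a..t, (u' x - G x) * ψ x) - c₀ * Iψ := by
      have h1 : (∫ x in a..t, ψ x * (u' x - G x - c₀))
          = ∫ x in a..t, ((u' x - G x) * ψ x - c₀ * ψ x) :=
        intervalIntegral.integral_congr fun x _ => by ring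
      rw [h1, intervalIntegral.integral_sub (hintUG ψ hψc)
        ((hψc.intervalIntegrable a t).const_mul _), intervalIntegral.integral_const_mul,
        hIψdef]
    rw [hfin, hIψc₀]; ring
  -- Step 4 : distributional conclusion
  have hae : ∀ᵐ x, x ∈ Ioo a t → deriv u x - G x - c₀ = 0 := by
    have hloc : LocallyIntegrableOn (fun x => deriv u x - G x - c₀) (Ioo a t) volume := by
      apply IntegrableOn.locallyIntegrableOn
      have h1 : IntegrableOn u' (Ioo a t) volume :=
        (((intervalIntegrable_iff_integrableOn_Ioc_of_le hat.le).mp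
          (deriv_integrable h hat.le))).mono_set Ioo_subset_Ioc_self
      have h2 : IntegrableOn (deriv u) (Ioo a t) volume :=
        h1.congr_fun (fun x hx => ((h.2.1 x hx).deriv).symm) measurableSet_Ioo
      have h3 : IntegrableOn G (Ioo a t) volume :=
        (hGc.integrableOn_Icc).mono_set Ioo_subset_Icc_self
      have h4 : IntegrableOn (fun _ => c₀) (Ioo a t) volume := by
        simp [integrableOn_const, measure_Ioo_lt_top]
      exact (h2.sub h3).sub h4
    apply isOpen_Ioo.ae_eq_zero_of_integral_contDiff_smul_eq_zero hloc
    intro ψ hψsm hψcpt hψsupp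
    have hψc : Continuous ψ := hψsm.continuous
    have hvan : ∀ x, x ∉ Ioo a t → ψ x • (deriv u x - G x - c₀) = 0 := fun x hx => by
      rw [image_eq_zero_of_notMem_tsupport (fun hm => hx (hψsupp hm))]; simp
    rw [← setIntegral_eq_integral_of_forall_compl_eq_zero hvan,
      ← integral_Ioc_eq_integral_Ioo, ← intervalIntegral.integral_of_le hat.le]
    have hcongr : (∫ x in a..t, ψ x • (deriv u x - G x - c₀))
        = ∫ x in a..t, ψ x * (u' x - G x - c₀) := by
      apply intervalIntegral.integral_congr_ae
      have h5 := ae_Ioo (a := a) (t := t) hat.le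
      rw [ae_restrict_iff' measurableSet_Ioc] at h5
      filter_upwards [h5] with x hx
      intro hx2
      rw [uIoc_of_le hat.le] at hx2
      have hxo : x ∈ Ioo a t := hx hx2
      rw [smul_eq_mul, (h.2.1 x hxo).deriv]
    rw [hcongr]
    exact key2 ψ hψc hψcpt hψsupp
  -- Step 5 : pointwise identity for u'
  set D := fun x => G x + c₀ with hDdef
  have hDc : Continuous D := hGc.add continuous_const
  have haeIoo : ∀ᵐ x ∂(volume.restrict (Ioo a t)), u' x = D x := by
    have h5 := (ae_restrict_iff' measurableSet_Ioo).mpr hae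
    filter_upwards [h5, ae_restrict_mem measurableSet_Ioo] with x hx hx2
    have : deriv u x - G x - c₀ = 0 := hx
    have hd : deriv u x = u' x := (h.2.1 x hx2).deriv
    simp only [hDdef]; linarith [hd ▸ this]
  have hptwise : ∀ y ∈ Ioo a t, u' y = D y := by
    have hFrep : ∀ z ∈ Ioo a t, u z = u x₀ + ∫ s in x₀..z, D s := by
      intro z hz
      have hsub2 : uIcc x₀ z ⊆ Ioo a t := by
        intro s hs
        rw [mem_uIcc] at hs
        rcases hs with ⟨h1, h2⟩ | ⟨h1, h2⟩
        · exact ⟨lt_of_lt_of_le hx₀m.1 h1, lt_of_le_of_lt h2 hz.2⟩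
        · exact ⟨lt_of_lt_of_le hz.1 h1, lt_of_le_of_lt h2 hx₀m.2⟩
      have hftc : (∫ s in x₀..z, u' s) = u z - u x₀ :=
        intervalIntegral.integral_eq_sub_of_hasDerivAt
          (fun s hs => h.2.1 s (hsub2 hs))
          ((deriv_integrable h hat.le).mono_set (by
            rw [uIcc_of_le hat.le]
            exact subset_trans hsub2 Ioo_subset_Icc_self))
      have hcongr2 : (∫ s in x₀..z, u' s) = ∫ s in x₀..z, D s := by
        apply intervalIntegral.integral_congr_ae
        have h6 := (ae_restrict_iff' measurableSet_Ioo).mp haeIoo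
        filter_upwards [h6] with s hs hs2
        exact hs (hsub2 (uIoc_subset_uIcc hs2))
      rw [hcongr2] at hftc
      linarith
    intro y hy
    have hF : HasDerivAt (fun z => u x₀ + ∫ s in x₀..z, D s) (D y) y :=
      ((hDc.integral_hasStrictDerivAt x₀ y).hasDerivAt).const_add (u x₀)
    have huD : HasDerivAt u (D y) y := by
      apply hF.congr_of_eventuallyEq
      filter_upwards [isOpen_Ioo.mem_nhds hy] with z hz
      exact (hFrep z hz)
    exact (h.2.1 y hy).unique huD
  refine ⟨D, hDc, hptwise, ?_⟩
  intro y hy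
  have hDd : HasDerivAt D ((V y - lam) * u y) y := by
    have := (hG y).add_const c₀
    rwa [hgV y (Ioo_subset_Icc_self hy)] at this
  apply hDd.congr_of_eventuallyEq
  filter_upwards [isOpen_Ioo.mem_nhds hy] with z hz
  exact hptwise z hz

end GSU

open GSU

/-- uniqueness (up to a.e. equality) of the nonnegative normalized
minimizer of the ground state energy on `(a,t)`. -/
theorem ground_state_unique (a b : ℝ) (hab : a < b)
    (V : ℝ → ℝ) (hV : ContinuousOn V (Set.Icc a b))
    (t : ℝ) (hat : a < t) (htb : t ≤ b)
    (u₁ u₁' u₂ u₂' : ℝ → ℝ)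
    (h₁ : MemH10 a t u₁ u₁') (h₂ : MemH10 a t u₂ u₂')
    (hn₁ : (∫ x in a..t, (u₁ x) ^ 2) = 1) (hn₂ : (∫ x in a..t, (u₂ x) ^ 2) = 1)
    (hpos₁ : ∀ x ∈ Set.Ioo a t, 0 ≤ u₁ x) (hpos₂ : ∀ x ∈ Set.Ioo a t, 0 ≤ u₂ x)
    (hmin₁ : (∫ x in a..t, ((u₁' x) ^ 2 + V x * (u₁ x) ^ 2)) = groundStateEnergy a V t)
    (hmin₂ : (∫ x in a..t, ((u₂' x) ^ 2 + V x * (u₂ x) ^ 2)) = groundStateEnergy a V t) :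
    ∀ᵐ x ∂(volume.restrict (Set.Ioo a t)), u₁ x = u₂ x := by
  set lam := groundStateEnergy a V t with hlam
  have hVt : ContinuousOn V (Icc a t) := hV.mono (Icc_subset_Icc_right htb)
  obtain ⟨M, hMb⟩ := isCompact_Icc.exists_bound_of_continuousOn hV
  have hM : ∀ x ∈ Icc a t, |V x| ≤ M := fun x hx =>
    hMb x (Icc_subset_Icc_right htb hx)
  obtain ⟨D₁, hD₁c, hD₁eq, hD₁d⟩ := minimizer_regular hat hM hVt h₁ hn₁ hmin₁
  obtain ⟨D₂, hD₂c, hD₂eq, hD₂d⟩ := minimizer_regular hat hM hVt h₂ hn₂ hmin₂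
  -- the Wronskian
  set Wr := fun x => u₁ x * D₂ x - u₂ x * D₁ x with hWrdef
  have hWrc : ContinuousOn Wr (Icc a t) :=
    ((h₁.1.mul hD₂c.continuousOn).sub (h₂.1.mul hD₁c.continuousOn))
  -- derivative of D_i on Ioo
  have hDd : ∀ i ∈ Ioo a t, True := fun _ _ => trivial
  have hD₁deriv : ∀ x ∈ Ioo a t, HasDerivAt D₁ ((V x - lam) * u₁ x) x := by
    intro x hx
    apply (hD₁d x hx).congr_of_eventuallyEq
    filter_upwards [isOpen_Ioo.mem_nhds hx] with z hz
    exact (hD₁eq z hz).symm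
  have hD₂deriv : ∀ x ∈ Ioo a t, HasDerivAt D₂ ((V x - lam) * u₂ x) x := by
    intro x hx
    apply (hD₂d x hx).congr_of_eventuallyEq
    filter_upwards [isOpen_Ioo.mem_nhds hx] with z hz
    exact (hD₂eq z hz).symm
  have hWrderiv : ∀ x ∈ Ioo a t, HasDerivAt Wr 0 x := by
    intro x hx
    have h1 : HasDerivAt (fun y => u₁ y * D₂ y)
        (u₁' x * D₂ x + u₁ x * ((V x - lam) * u₂ x)) x :=
      (h₁.2.1 x hx).mul (hD₂deriv x hx)
    have h2 : HasDerivAt (fun y => u₂ y * D₁ y)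
        (u₂' x * D₁ x + u₂ x * ((V x - lam) * u₁ x)) x :=
      (h₂.2.1 x hx).mul (hD₁deriv x hx)
    have h3 := h1.sub h2
    have heq : u₁' x * D₂ x + u₁ x * ((V x - lam) * u₂ x)
        - (u₂' x * D₁ x + u₂ x * ((V x - lam) * u₁ x)) = 0 := by
      rw [← hD₁eq x hx, ← hD₂eq x hx]; ring
    rwa [heq] at h3
  -- Wr is constant on Ioo
  have hWrconst : ∀ x ∈ Ioo a t, ∀ y ∈ Ioo a t, Wr x = Wr y := by
    have key : ∀ x y : ℝ, x ∈ Ioo a t → y ∈ Ioo a t → x < y → Wr x = Wr y := by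
      intro x y hx hy hxy
      have hsub : Icc x y ⊆ Ioo a t := fun z hz =>
        ⟨lt_of_lt_of_le hx.1 hz.1, lt_of_le_of_lt hz.2 hy.2⟩
      obtain ⟨c, _, hc⟩ := exists_hasDerivAt_eq_slope Wr (fun _ => 0) hxy
        (hWrc.mono (subset_trans hsub Ioo_subset_Icc_self))
        (fun z hz => hWrderiv z (hsub (Ioo_subset_Icc_self hz)))
      have hyx : y - x ≠ 0 := sub_ne_zero.mpr (ne_of_gt hxy)
      have h9 := hc.symm
      rw [div_eq_iff hyx] at h9
      simp only [zero_mul] at h9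
      linarith
    intro x hx y hy
    rcases lt_trichotomy x y with h | h | h
    · exact key x y hx hy h
    · rw [h]
    · exact (key y x hy hx h).symm
  -- Wr vanishes at a, hence everywhere on Ioo
  have hWra : Wr a = 0 := by
    simp [hWrdef, h₁.2.2.2.1, h₂.2.2.2.1]
  have hWr0 : ∀ x ∈ Ioo a t, Wr x = 0 := by
    intro x hx
    -- Wr is continuous at a from the right; constant on Ioo
    have hcont : ContinuousWithinAt Wr (Icc a t) a :=
      hWrc a (left_mem_Icc.mpr hat.le)
    have htd : Filter.Tendsto Wr (nhdsWithin a (Ioo a t)) (nhds (Wr a)) :=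
      hcont.tendsto.mono_left (nhdsWithin_mono a Ioo_subset_Icc_self)
    have htd2 : Filter.Tendsto Wr (nhdsWithin a (Ioo a t)) (nhds (Wr x)) := by
      apply Filter.Tendsto.congr' _ tendsto_const_nhds
      filter_upwards [self_mem_nhdsWithin] with z hz
      exact (hWrconst x hx z hz)
    have hne : (nhdsWithin a (Ioo a t)).NeBot := by
      apply IsGLB.nhdsWithin_neBot
      · exact isGLB_Ioo hat
      · exact nonempty_Ioo.mpr hat
    rw [tendsto_nhds_unique htd2 htd, hWra]
  -- find a point where u₂ > 0
  have hx₀ : ∃ x₀ ∈ Ioo a t, 0 < u₂ x₀ := by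
    by_contra hc
    push_neg at hc
    have hz : ∀ x ∈ Ioo a t, u₂ x = 0 := fun x hx =>
      le_antisymm (hc x hx) (hpos₂ x hx)
    have : (∫ x in a..t, (u₂ x) ^ 2) = 0 := by
      rw [intervalIntegral.integral_of_le hat.le, integral_Ioc_eq_integral_Ioo]
      rw [setIntegral_congr_fun measurableSet_Ioo (g := fun _ => (0:ℝ))
        (fun x hx => by rw [hz x hx]; norm_num)]
      simp
    rw [hn₂] at this; norm_num at this
  obtain ⟨x₀, hx₀m, hx₀pos⟩ := hx₀
  set k := u₁ x₀ / u₂ x₀ with hkdef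
  have hku : u₁ x₀ = k * u₂ x₀ := by
    rw [hkdef]; field_simp
  have hkD : D₁ x₀ = k * D₂ x₀ := by
    have hw := hWr0 x₀ hx₀m
    simp only [hWrdef] at hw
    rw [hkdef]
    field_simp
    nlinarith [hw]
  -- the ODE system
  set Vc := V ∘ clamp a t with hVcdef
  have hVcc : Continuous Vc := ext_continuous hat.le hVt
  have hVceq : ∀ x ∈ Icc a t, Vc x = V x := fun x hx => by
    simp only [hVcdef, Function.comp_apply, clamp_eq hx]
  set C := fun x => Vc x - lam with hCdef
  have hCx : ∀ x ∈ Icc a t, C x = V x - lam := by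
    intro x hx
    simp only [hCdef]
    rw [hVceq x hx]
  have hCb : ∀ x, |C x| ≤ M + |lam| := by
    intro x
    have h1 : |Vc x| ≤ M := by
      simp only [hVcdef, Function.comp_apply]
      exact hM _ (clamp_mem hat.le x)
    calc |C x| ≤ |Vc x| + |lam| := abs_sub _ _
      _ ≤ M + |lam| := by linarith
  set L := max 1 (M + |lam|) with hLdef
  have hL1 : (1:ℝ) ≤ L := le_max_left _ _
  set K : NNReal := Real.toNNReal L with hKdef
  have hKcoe : (K : ℝ) = L := Real.coe_toNNReal _ (by linarith)
  set vF : ℝ → ℝ × ℝ → ℝ × ℝ := fun x p => (p.2, C x * p.1) with hvFdef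
  have hlip : ∀ x, LipschitzOnWith K (vF x) univ := by
    intro x
    apply LipschitzWith.lipschitzOnWith
    apply LipschitzWith.of_dist_le_mul
    intro p q
    rw [Prod.dist_eq]
    simp only [hvFdef]
    rw [Prod.dist_eq]
    apply max_le
    · calc dist p.2 q.2 ≤ max (dist p.1 q.1) (dist p.2 q.2) := le_max_right _ _
        _ ≤ K * max (dist p.1 q.1) (dist p.2 q.2) := by
            nlinarith [le_max_left (dist p.1 q.1) (dist p.2 q.2), dist_nonneg (x := p.1) (y := q.1), dist_nonneg (x := p.2) (y := q.2), hKcoe ▸ hL1]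
    · rw [Real.dist_eq]
      have : C x * p.1 - C x * q.1 = C x * (p.1 - q.1) := by ring
      rw [this, abs_mul, ← Real.dist_eq]
      calc |C x| * dist p.1 q.1 ≤ L * dist p.1 q.1 := by
            apply mul_le_mul_of_nonneg_right _ dist_nonneg
            calc |C x| ≤ M + |lam| := hCb x
              _ ≤ L := le_max_right _ _
        _ ≤ L * max (dist p.1 q.1) (dist p.2 q.2) := by
            apply mul_le_mul_of_nonneg_left (le_max_left _ _) (by linarith)
        _ = K * max (dist p.1 q.1) (dist p.2 q.2) := by rw [hKcoe]
  -- the two solutions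
  set F1 : ℝ → ℝ × ℝ := fun x => (u₁ x, D₁ x) with hF1def
  set F2 : ℝ → ℝ × ℝ := fun x => (k * u₂ x, k * D₂ x) with hF2def
  have hF1sol : ∀ x ∈ Ioo a t, HasDerivAt F1 (vF x (F1 x)) x ∧ F1 x ∈ univ := by
    intro x hx
    refine ⟨?_, trivial⟩
    have h1 : HasDerivAt u₁ (D₁ x) x := by
      have := h₁.2.1 x hx
      rwa [hD₁eq x hx] at this
    have h2 : HasDerivAt D₁ (C x * u₁ x) x := by
      have h7 := hD₁deriv x hx
      rwa [← hCx x (Ioo_subset_Icc_self hx)] at h7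
    exact h1.prodMk h2
  have hF2sol : ∀ x ∈ Ioo a t, HasDerivAt F2 (vF x (F2 x)) x ∧ F2 x ∈ univ := by
    intro x hx
    refine ⟨?_, trivial⟩
    have h1 : HasDerivAt (fun y => k * u₂ y) (k * D₂ x) x := by
      have := (h₂.2.1 x hx).const_mul k
      rwa [hD₂eq x hx] at this
    have h2 : HasDerivAt (fun y => k * D₂ y) (C x * (k * u₂ x)) x := by
      have := (hD₂deriv x hx).const_mul k
      have heq : k * ((V x - lam) * u₂ x) = C x * (k * u₂ x) := by
        rw [hCx x (Ioo_subset_Icc_self hx)]; ring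
      rwa [heq] at this
    exact h1.prodMk h2
  have hinit : F1 x₀ = F2 x₀ := by
    simp only [hF1def, hF2def, Prod.mk.injEq]
    exact ⟨hku, hkD⟩
  have heqon : EqOn F1 F2 (Ioo a t) :=
    ODE_solution_unique_of_mem_Ioo (fun x _ => hlip x) hx₀m hF1sol hF2sol hinit
  have hueq : ∀ x ∈ Ioo a t, u₁ x = k * u₂ x := by
    intro x hx
    have := heqon hx
    exact congrArg Prod.fst this
  -- k = 1
  have hk1 : k = 1 := by
    have hsq : (1:ℝ) = k ^ 2 := by
      have hI : (∫ x in a..t, (u₁ x) ^ 2) = ∫ x in a..t, k ^ 2 * (u₂ x) ^ 2 := by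
        apply intervalIntegral.integral_congr_ae
        have h5 := ae_Ioo (a := a) (t := t) hat.le
        rw [ae_restrict_iff' measurableSet_Ioc] at h5
        filter_upwards [h5] with x hx hx2
        rw [uIoc_of_le hat.le] at hx2
        rw [hueq x (hx hx2)]; ring
      rw [hn₁] at hI
      rw [hI, intervalIntegral.integral_const_mul, hn₂, mul_one]
    have hknn : 0 ≤ k := div_nonneg (hpos₁ x₀ hx₀m) hx₀pos.le
    nlinarith
  -- conclusion
  filter_upwards [ae_restrict_mem measurableSet_Ioo] with x hx
  rw [hueq x hx, hk1, one_mul]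
end

section
/- The ground state energy blows up as the interval shrinks to a point: λ(t) → ∞ as t → a from the right. -/
open MeasureTheory Set

/-- The admissible set is nonempty: a normalized sine function belongs to it. -/
lemma gse_set_nonempty (a t : ℝ) (V : ℝ → ℝ) (ht : a < t) :
    Set.Nonempty { E : ℝ | ∃ u u' : ℝ → ℝ, MemH10 a t u u' ∧
      (∫ x in a..t, (u x) ^ 2) = 1 ∧
      E = ∫ x in a..t, ((u' x) ^ 2 + V x * (u x) ^ 2) } := by
  set L := t - a with hLdef
  have hL : 0 < L := sub_pos.2 ht
  set u₀ : ℝ → ℝ := fun x => Real.sin (Real.pi / L * (x - a)) with hu₀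
  set u₀' : ℝ → ℝ := fun x => Real.cos (Real.pi / L * (x - a)) * (Real.pi / L) with hu₀'
  have hderiv : ∀ x : ℝ, HasDerivAt u₀ (u₀' x) x := by
    intro x
    have hg : HasDerivAt (fun y : ℝ => Real.pi / L * (y - a)) (Real.pi / L) x := by
      simpa using ((hasDerivAt_id x).sub_const a).const_mul (Real.pi / L)
    simpa [u₀, u₀', Function.comp_def] using (Real.hasDerivAt_sin (Real.pi / L * (x - a))).comp x hg
  have hu₀a : u₀ a = 0 := by simp [u₀]
  have hu₀t : u₀ t = 0 := by
    have : Real.pi / L * (t - a) = Real.pi := by field_simp [hLdef]; exact hLdef.symm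
    simp [u₀, this, Real.sin_pi]
  have hcont : Continuous u₀ := by
    have : Continuous fun y : ℝ => Real.pi / L * (y - a) := by continuity
    exact Real.continuous_sin.comp this
  have hcont' : Continuous u₀' := by
    have : Continuous fun y : ℝ => Real.pi / L * (y - a) := by continuity
    exact (Real.continuous_cos.comp this).mul continuous_const
  have hint_sq : IntervalIntegrable (fun x => (u₀ x) ^ 2) volume a t :=
    ((hcont.pow 2).continuousOn).intervalIntegrable
  have hc : 0 < ∫ x in a..t, (u₀ x) ^ 2 := by
    refine intervalIntegral.intervalIntegral_pos_of_pos_on hint_sq (fun x hx => ?_) ht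
    have h1 : 0 < Real.pi / L * (x - a) :=
      mul_pos (div_pos Real.pi_pos hL) (sub_pos.2 hx.1)
    have h2 : Real.pi / L * (x - a) < Real.pi := by
      have : Real.pi / L * (x - a) < Real.pi / L * L :=
        (mul_lt_mul_iff_right₀ (div_pos Real.pi_pos hL)).2 (by simpa [hLdef] using hx.2)
      simpa [div_mul_cancel₀, hL.ne'] using this
    have := Real.sin_pos_of_pos_of_lt_pi h1 h2
    exact pow_pos (by simpa [u₀] using this) 2
  set c := ∫ x in a..t, (u₀ x) ^ 2 with hcdef
  set s := (Real.sqrt c)⁻¹ with hsdef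
  have hs2 : s ^ 2 = c⁻¹ := by
    rw [hsdef, inv_pow, Real.sq_sqrt hc.le]
  refine ⟨∫ x in a..t, ((s * u₀' x) ^ 2 + V x * (s * u₀ x) ^ 2),
    fun x => s * u₀ x, fun x => s * u₀' x, ⟨?_, ?_, ?_, ?_, ?_⟩, ?_, rfl⟩
  · exact ((continuous_const.mul hcont)).continuousOn
  · intro x _
    simpa [mul_comm] using (hderiv x).const_mul s
  · exact (((continuous_const.mul hcont').pow 2).continuousOn).intervalIntegrable
  · simp [hu₀a]
  · simp [hu₀t]
  · have : (∫ x in a..t, (s * u₀ x) ^ 2) = s ^ 2 * ∫ x in a..t, (u₀ x) ^ 2 := by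
      simp_rw [mul_pow]
      exact intervalIntegral.integral_const_mul _ _
    rw [this, hs2, ← hcdef, inv_mul_cancel₀ hc.ne']

/-- Core estimate: for normalized `u ∈ H¹₀((a,t))`, the energy is at least
`(t-a)⁻¹ - 1 - M` where `M` bounds `|V|` on `[a,b]`. -/
lemma gse_lower (a b : ℝ) (V : ℝ → ℝ) (hV : ContinuousOn V (Icc a b))
    (M : ℝ) (hM : ∀ x ∈ Icc a b, |V x| ≤ M)
    (t : ℝ) (ht : a < t) (htb : t ≤ b) :
    (t - a)⁻¹ - 1 - M ≤ groundStateEnergy a V t := by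
  refine le_csInf (gse_set_nonempty a t V ht) ?_
  rintro E ⟨u, u', ⟨hu_c, hu_d, hu_i, hu_a, hu_t⟩, hnorm, rfl⟩
  -- measurability of u'
  have h_ae : u' =ᶠ[ae (volume.restrict (Ioc a t))] deriv u := by
    have h0 : ∀ᵐ x ∂(volume : Measure ℝ), x ≠ t := by
      refine compl_mem_ae_iff.2 ?_
      exact measure_singleton t
    rw [Filter.EventuallyEq, ae_restrict_iff' measurableSet_Ioc]
    filter_upwards [h0] with x hx hx'
    exact ((hu_d x ⟨hx'.1, lt_of_le_of_ne hx'.2 hx⟩).deriv).symm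
  have hu'_meas : AEStronglyMeasurable u' (volume.restrict (Ioc a t)) :=
    ((measurable_deriv u).aestronglyMeasurable).congr h_ae.symm
  have hu_meas : AEStronglyMeasurable u (volume.restrict (Ioc a t)) :=
    (hu_c.mono Ioc_subset_Icc_self).aestronglyMeasurable measurableSet_Ioc
  have husq_int : IntervalIntegrable (fun x => (u x) ^ 2) volume a t := by
    apply ContinuousOn.intervalIntegrable
    rw [uIcc_of_le ht.le]
    exact hu_c.pow 2
  -- integrability of u * u'
  have huu'_int : IntervalIntegrable (fun x => u x * u' x) volume a t := by
    rw [intervalIntegrable_iff, uIoc_of_le ht.le]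
    have hgint : IntegrableOn (fun x => ((u x) ^ 2 + (u' x) ^ 2) / 2) (Ioc a t) volume := by
      have h1 : IntegrableOn (fun x => (u x) ^ 2 + (u' x) ^ 2) (Ioc a t) volume := by
        have := (husq_int.add hu_i)
        rw [intervalIntegrable_iff, uIoc_of_le ht.le] at this
        exact this
      exact h1.div_const 2
    refine Integrable.mono' hgint (hu_meas.mul hu'_meas) ?_
    refine Filter.Eventually.of_forall fun x => ?_
    rw [Real.norm_eq_abs, abs_mul]
    nlinarith [sq_nonneg (|u x| - |u' x|), sq_abs (u x), sq_abs (u' x),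
      abs_nonneg (u x), abs_nonneg (u' x)]
  -- pointwise bound : u x ^ 2 ≤ 1 + ∫ u'^2
  set I' := ∫ x in a..t, (u' x) ^ 2 with hI'
  have hsum_int : IntervalIntegrable (fun x => (u x) ^ 2 + (u' x) ^ 2) volume a t :=
    husq_int.add hu_i
  have hbound : ∀ x ∈ Icc a t, (u x) ^ 2 ≤ 1 + I' := by
    intro x hx
    have hax : a ≤ x := hx.1
    have hxt : x ≤ t := hx.2
    have hsub : uIcc a x ⊆ uIcc a t := by
      rw [uIcc_of_le hax, uIcc_of_le ht.le]
      exact Icc_subset_Icc le_rfl hxt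
    have hftc : (∫ y in a..x, 2 * u y ^ 1 * u' y) = u x ^ 2 - u a ^ 2 := by
      refine intervalIntegral.integral_eq_sub_of_hasDeriv_right_of_le hax
        (fun y hy => ((hu_c.mono (Icc_subset_Icc le_rfl hxt)) y hy).pow 2) ?_ ?_
      · intro y hy
        have : HasDerivAt (fun z => u z ^ 2) (2 * u y ^ 1 * u' y) y := by
          have := (hu_d y ⟨hy.1, lt_of_lt_of_le hy.2 hxt⟩).pow 2
          simpa [Pi.pow_def] using this
        exact this.hasDerivWithinAt
      · have h1 := huu'_int.mono_set hsub
        have h2 := h1.const_mul 2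
        have heq : (fun y => 2 * u y ^ 1 * u' y) = fun y => 2 * (u y * u' y) := by
          funext y; ring
        rw [heq]
        exact h2
    have huu'x : IntervalIntegrable (fun y => u y * u' y) volume a x :=
      huu'_int.mono_set hsub
    have hsumx : IntervalIntegrable (fun y => (u y) ^ 2 + (u' y) ^ 2) volume a x :=
      hsum_int.mono_set hsub
    have h2int : IntervalIntegrable (fun y => 2 * u y ^ 1 * u' y) volume a x := by
      have heq : (fun y => 2 * u y ^ 1 * u' y) = fun y => 2 * (u y * u' y) := by
        funext y; ring
      rw [heq]
      exact huu'x.const_mul 2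
    have hstep1 : (∫ y in a..x, 2 * u y ^ 1 * u' y)
        ≤ ∫ y in a..x, ((u y) ^ 2 + (u' y) ^ 2) := by
      refine intervalIntegral.integral_mono_on hax h2int hsumx (fun y _ => ?_)
      nlinarith [sq_nonneg (u y - u' y)]
    have hstep2 : (∫ y in a..x, ((u y) ^ 2 + (u' y) ^ 2))
        ≤ ∫ y in a..t, ((u y) ^ 2 + (u' y) ^ 2) := by
      refine intervalIntegral.integral_mono_interval le_rfl hax hxt ?_ hsum_int
      exact Filter.Eventually.of_forall fun y => by positivity
    have hsplit : (∫ y in a..t, ((u y) ^ 2 + (u' y) ^ 2)) = 1 + I' := by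
      rw [intervalIntegral.integral_add husq_int hu_i, hnorm]
    have := hftc.symm.trans_le (hstep1.trans (hstep2.trans_eq hsplit))
    rw [hu_a] at this
    simpa using this
  -- 1 ≤ (t - a) * (1 + I')
  have hkey : 1 ≤ (t - a) * (1 + I') := by
    have h1 : (∫ x in a..t, (u x) ^ 2) ≤ ∫ _x in a..t, (1 + I') :=
      intervalIntegral.integral_mono_on ht.le husq_int intervalIntegrable_const hbound
    rw [hnorm, intervalIntegral.integral_const, smul_eq_mul] at h1
    exact h1
  have hI'pos : (t - a)⁻¹ - 1 ≤ I' := by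
    have hta : 0 < t - a := sub_pos.2 ht
    have := (div_le_iff₀ hta).2 (by linarith [hkey] : 1 ≤ (1 + I') * (t - a))
    rw [one_div] at this
    linarith
  -- bound on the potential term
  have hVu_int : IntervalIntegrable (fun x => V x * (u x) ^ 2) volume a t := by
    apply ContinuousOn.intervalIntegrable
    rw [uIcc_of_le ht.le]
    exact (hV.mono (Icc_subset_Icc le_rfl htb)).mul (hu_c.pow 2)
  have hVu_lb : -M ≤ ∫ x in a..t, V x * (u x) ^ 2 := by
    have hMu_int : IntervalIntegrable (fun x => -M * (u x) ^ 2) volume a t :=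
      husq_int.const_mul (-M)
    have h1 : (∫ x in a..t, -M * (u x) ^ 2) ≤ ∫ x in a..t, V x * (u x) ^ 2 := by
      refine intervalIntegral.integral_mono_on ht.le hMu_int hVu_int (fun x hx => ?_)
      have hVx := hM x (Icc_subset_Icc le_rfl htb hx)
      have : -M ≤ V x := neg_le_of_abs_le hVx
      exact mul_le_mul_of_nonneg_right this (sq_nonneg _)
    rwa [intervalIntegral.integral_const_mul, hnorm, mul_one] at h1
  have hsplitE : (∫ x in a..t, ((u' x) ^ 2 + V x * (u x) ^ 2)) = I' + ∫ x in a..t, V x * (u x) ^ 2 := by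
    rw [intervalIntegral.integral_add hu_i hVu_int]
  rw [hsplitE]
  linarith

/-- the ground state energy blows up as the interval shrinks to a point:
`λ(t) → ∞` as `t → a⁺`. -/
theorem ground_state_tendsto_atTop (a b : ℝ) (hab : a < b)
    (V : ℝ → ℝ) (hV : ContinuousOn V (Set.Icc a b)) :
    Filter.Tendsto (groundStateEnergy a V) (nhdsWithin a (Set.Ioc a b)) Filter.atTop := by
  obtain ⟨M, hM⟩ := (isCompact_Icc).exists_bound_of_continuousOn hV
  have h1 : Filter.Tendsto (fun t => t - a) (nhdsWithin a (Set.Ioc a b)) (nhdsWithin 0 (Set.Ioi 0)) := by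
    rw [tendsto_nhdsWithin_iff]
    constructor
    · have h0 : Filter.Tendsto (fun t : ℝ => t - a) (nhds a) (nhds (a - a)) :=
        (continuous_id.sub continuous_const).tendsto a
      rw [sub_self] at h0
      exact h0.mono_left nhdsWithin_le_nhds
    · exact Filter.eventually_of_mem self_mem_nhdsWithin fun t ht => sub_pos.2 ht.1
  have h2 : Filter.Tendsto (fun t => (t - a)⁻¹) (nhdsWithin a (Set.Ioc a b)) Filter.atTop :=
    tendsto_inv_nhdsGT_zero.comp h1
  have h3 : Filter.Tendsto (fun t => (t - a)⁻¹ - 1 - M) (nhdsWithin a (Set.Ioc a b))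
      Filter.atTop := by
    have := Filter.tendsto_atTop_add_const_right _ (-1 - M) h2
    refine this.congr fun t => by ring
  refine Filter.tendsto_atTop_mono' _ ?_ h3
  exact Filter.eventually_of_mem self_mem_nhdsWithin fun t ht =>
    gse_lower a b V hV M (fun x hx => hM x hx) t ht.1 ht.2
end

section
/- Hadamard variational formula: for every t ∈ (a,b), the derivative of the eigenvalue with respect to the endpoint satisfies λ'(t) = −(∂ₓu(t,t))², where ∂ₓu(t,t) denotes the spatial derivative of u(t,·) at x = t. -/
open MeasureTheory Set

open Filter Topology in
private lemma aux_hasDerivAt_x (u : ℝ → ℝ → ℝ) (hC1 : ContDiff ℝ 1 (Function.uncurry u))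
    (t x : ℝ) :
    HasDerivAt (u t) (fderiv ℝ (Function.uncurry u) (t, x) (0, 1)) x := by
  have h := (hC1.differentiable one_ne_zero (t, x)).hasFDerivAt
  have hline : HasDerivAt (fun y : ℝ => ((t : ℝ), y)) ((0 : ℝ), (1 : ℝ)) x :=
    (hasDerivAt_const x t).prodMk (hasDerivAt_id x)
  exact h.comp_hasDerivAt x hline

private lemma aux_hasDerivAt_t (u : ℝ → ℝ → ℝ) (hC1 : ContDiff ℝ 1 (Function.uncurry u))
    (t x : ℝ) :
    HasDerivAt (fun s => u s x) (fderiv ℝ (Function.uncurry u) (t, x) (1, 0)) t := by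
  have h := (hC1.differentiable one_ne_zero (t, x)).hasFDerivAt
  have hline : HasDerivAt (fun s : ℝ => (s, x)) ((1 : ℝ), (0 : ℝ)) t :=
    (hasDerivAt_id t).prodMk (hasDerivAt_const t x)
  exact h.comp_hasDerivAt t hline

private lemma aux_hasDerivAt_diag (u : ℝ → ℝ → ℝ) (hC1 : ContDiff ℝ 1 (Function.uncurry u))
    (t : ℝ) :
    HasDerivAt (fun s => u s s) (fderiv ℝ (Function.uncurry u) (t, t) (1, 1)) t := by
  have h := (hC1.differentiable one_ne_zero (t, t)).hasFDerivAt
  have hline : HasDerivAt (fun s : ℝ => (s, s)) ((1 : ℝ), (1 : ℝ)) t :=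
    (hasDerivAt_id t).prodMk (hasDerivAt_id t)
  exact HasFDerivAt.comp_hasDerivAt (f := fun s : ℝ => (s, s)) t h hline

private lemma aux_contDx (u : ℝ → ℝ → ℝ) (hC1 : ContDiff ℝ 1 (Function.uncurry u)) :
    Continuous (fun p : ℝ × ℝ => deriv (u p.1) p.2) := by
  have : (fun p : ℝ × ℝ => deriv (u p.1) p.2)
      = fun p : ℝ × ℝ => fderiv ℝ (Function.uncurry u) p (0, 1) := by
    ext p
    exact (aux_hasDerivAt_x u hC1 p.1 p.2).deriv
  rw [this]
  exact (hC1.continuous_fderiv one_ne_zero).clm_apply continuous_const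

private lemma aux_deriv2 (f : ℝ → ℝ) (x : ℝ) (h : ContDiffAt ℝ 2 f x) :
    HasDerivAt (deriv f) (deriv (deriv f) x) x := by
  obtain ⟨u, hu, hcd⟩ := h.contDiffOn (le_refl _) (by norm_num)
  obtain ⟨v, hvu, hvo, hxv⟩ := mem_nhds_iff.mp hu
  have h2 : ContDiffOn ℝ 2 f v := hcd.mono hvu
  have h3 : ContDiffOn ℝ 1 (deriv f) v := h2.deriv_of_isOpen hvo (by norm_num)
  have h4 : DifferentiableAt ℝ (deriv f) x :=
    (h3.differentiableOn one_ne_zero).differentiableAt (hvo.mem_nhds hxv)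
  exact h4.hasDerivAt

private lemma aux_wronskian (V : ℝ → ℝ) (hV : Continuous V) (lam : ℝ → ℝ) (u : ℝ → ℝ → ℝ)
    (hC1 : ContDiff ℝ 1 (Function.uncurry u))
    (a s t : ℝ) (has : a < s) (hat : a < t)
    (hs2 : ContDiffOn ℝ 2 (u s) (Icc a s)) (ht2 : ContDiffOn ℝ 2 (u t) (Icc a t))
    (heqs : ∀ x ∈ Ioo a s, -(deriv (deriv (u s)) x) + V x * u s x = lam s * u s x)
    (heqt : ∀ x ∈ Ioo a t, -(deriv (deriv (u t)) x) + V x * u t x = lam t * u t x)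
    (huta : u t a = 0) (husa : u s a = 0) :
    (lam t - lam s) * ∫ x in a..(min s t), u t x * u s x =
      u t (min s t) * deriv (u s) (min s t) - u s (min s t) * deriv (u t) (min s t) := by
  set m := min s t with hm
  have ham : a ≤ m := (lt_min has hat).le
  have hcu : ∀ r : ℝ, Continuous (u r) := fun r =>
    hC1.continuous.comp (Continuous.prodMk_right r)
  have hcd : ∀ r : ℝ, Continuous (deriv (u r)) := fun r =>
    (aux_contDx u hC1).comp (Continuous.prodMk_right r)
  set w : ℝ → ℝ := fun x => u t x * deriv (u s) x - u s x * deriv (u t) x with hw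
  have hwc : Continuous w := (((hcu t).mul (hcd s)).sub ((hcu s).mul (hcd t)))
  have hderiv : ∀ x ∈ Ioo a m, HasDerivAt w ((lam t - lam s) * (u t x * u s x)) x := by
    intro x hx
    have hxs : x ∈ Ioo a s := ⟨hx.1, lt_of_lt_of_le hx.2 (min_le_left _ _)⟩
    have hxt : x ∈ Ioo a t := ⟨hx.1, lt_of_lt_of_le hx.2 (min_le_right _ _)⟩
    have hut : HasDerivAt (u t) (deriv (u t) x) x :=
      (aux_hasDerivAt_x u hC1 t x).differentiableAt.hasDerivAt
    have hus : HasDerivAt (u s) (deriv (u s) x) x :=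
      (aux_hasDerivAt_x u hC1 s x).differentiableAt.hasDerivAt
    have hdt : HasDerivAt (deriv (u t)) (deriv (deriv (u t)) x) x :=
      aux_deriv2 _ x (ht2.contDiffAt (Icc_mem_nhds hxt.1 hxt.2))
    have hds : HasDerivAt (deriv (u s)) (deriv (deriv (u s)) x) x :=
      aux_deriv2 _ x (hs2.contDiffAt (Icc_mem_nhds hxs.1 hxs.2))
    have h1 : HasDerivAt w
        (deriv (u t) x * deriv (u s) x + u t x * deriv (deriv (u s)) x -
          (deriv (u s) x * deriv (u t) x + u s x * deriv (deriv (u t)) x)) x :=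
      (hut.mul hds).sub (hus.mul hdt)
    have e1 : deriv (deriv (u s)) x = V x * u s x - lam s * u s x := by
      have := heqs x hxs; linarith
    have e2 : deriv (deriv (u t)) x = V x * u t x - lam t * u t x := by
      have := heqt x hxt; linarith
    convert h1 using 1
    rw [e1, e2]; ring
  have hint : IntervalIntegrable (fun x => (lam t - lam s) * (u t x * u s x)) volume a m :=
    (continuous_const.mul ((hcu t).mul (hcu s))).intervalIntegrable _ _
  have hftc := intervalIntegral.integral_eq_sub_of_hasDeriv_right_of_le ham
    hwc.continuousOn (fun x hx => (hderiv x hx).hasDerivWithinAt) hint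
  have hwa : w a = 0 := by simp [hw, huta, husa]
  rw [intervalIntegral.integral_const_mul] at hftc
  rw [hftc, hwa, sub_zero]

open Filter Topology in
/-- Hadamard variational formula `λ'(t) = -(∂ₓu(t,t))²` for the
Dirichlet eigenvalue as a function of the right endpoint. Here `u t x` denotes
`u(t,x)`, `deriv (u t) x` is `∂ₓu(t,x)` and `deriv (fun s => u s x) t` is `∂ₜu(t,x)`. -/
theorem hadamard_variational_formula
    (V : ℝ → ℝ) (hV : Continuous V)
    (a b : ℝ) (hab : a < b)
    (lam : ℝ → ℝ) (hlam : ∀ t ∈ Set.Ioo a b, DifferentiableAt ℝ lam t)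
    (u : ℝ → ℝ → ℝ)
    (hC1 : ContDiff ℝ 1 (Function.uncurry u))
    (huxx : Continuous (fun p : ℝ × ℝ => deriv (deriv (u p.1)) p.2))
    (hutx : Continuous (fun p : ℝ × ℝ => deriv (fun s => deriv (u s) p.2) p.1))
    (htwice : ∀ t ∈ Set.Ioo a b, ContDiffOn ℝ 2 (u t) (Set.Icc a t))
    (heq : ∀ t ∈ Set.Ioo a b, ∀ x ∈ Set.Ioo a t,
      -(deriv (deriv (u t)) x) + V x * u t x = lam t * u t x)
    (hbca : ∀ t ∈ Set.Ioo a b, u t a = 0)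
    (hbct : ∀ t ∈ Set.Ioo a b, u t t = 0)
    (hnorm : ∀ t ∈ Set.Ioo a b, (∫ x in a..t, (u t x) ^ 2) = 1)
    :
    ∀ t ∈ Set.Ioo a b, deriv lam t = -(deriv (u t) t) ^ 2 := by
  intro t₀ ht₀
  obtain ⟨hat₀, ht₀b⟩ := ht₀
  set d := deriv (u t₀) t₀ with hdd
  have hIoo : Ioo a b ∈ 𝓝 t₀ := Ioo_mem_nhds hat₀ ht₀b
  -- the slope of lam tends to deriv lam t₀
  have hlam' : HasDerivAt lam (deriv lam t₀) t₀ := (hlam t₀ ⟨hat₀, ht₀b⟩).hasDerivAt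
  have hslope : Tendsto (fun s => (lam s - lam t₀) / (s - t₀)) (𝓝[≠] t₀)
      (𝓝 (deriv lam t₀)) := by
    have h := hasDerivAt_iff_tendsto_slope.mp hlam'
    have he : slope lam t₀ = fun s => (lam s - lam t₀) / (s - t₀) := by
      ext s; simp [slope_def_field]
    rwa [he] at h
  -- the normalization-type integral I
  set I : ℝ → ℝ := fun s => ∫ x in a..(min s t₀), u t₀ x * u s x with hI
  have hIcont : Continuous I := by
    apply intervalIntegral.continuous_parametric_intervalIntegral_of_continuous
    · have : Function.uncurry (fun (s : ℝ) (x : ℝ) => u t₀ x * u s x)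
          = fun p : ℝ × ℝ => u t₀ p.2 * u p.1 p.2 := rfl
      rw [this]
      exact ((hC1.continuous.comp (Continuous.prodMk_right t₀)).comp continuous_snd).mul
        hC1.continuous
    · exact continuous_id.min continuous_const
  have hI1 : I t₀ = 1 := by
    have : I t₀ = ∫ x in a..t₀, (u t₀ x) ^ 2 := by
      simp only [hI, min_self]
      congr 1; ext x; ring
    rw [this]; exact hnorm t₀ ⟨hat₀, ht₀b⟩
  have hItend : Tendsto I (𝓝[≠] t₀) (𝓝 1) := by
    have := hIcont.continuousAt (x := t₀)
    rw [ContinuousAt, hI1] at this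
    exact this.mono_left nhdsWithin_le_nhds
  -- key identity
  have key : ∀ s ∈ Ioo a b, (lam t₀ - lam s) * I s =
      u t₀ (min s t₀) * deriv (u s) (min s t₀) -
        u s (min s t₀) * deriv (u t₀) (min s t₀) := by
    intro s hs
    exact aux_wronskian V hV lam u hC1 a s t₀ hs.1 hat₀
      (htwice s hs) (htwice t₀ ⟨hat₀, ht₀b⟩) (heq s hs) (heq t₀ ⟨hat₀, ht₀b⟩)
      (hbca t₀ ⟨hat₀, ht₀b⟩) (hbca s hs)
  -- limit of N
  set N : ℝ → ℝ := fun s =>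
    (u t₀ (min s t₀) * deriv (u s) (min s t₀) -
      u s (min s t₀) * deriv (u t₀) (min s t₀)) / (t₀ - s) with hN
  have hut00 : u t₀ t₀ = 0 := hbct t₀ ⟨hat₀, ht₀b⟩
  -- d as a partial derivative
  have hdx : HasDerivAt (u t₀) d t₀ := by
    have h := aux_hasDerivAt_x u hC1 t₀ t₀
    rwa [← h.deriv] at h
  have hdval : fderiv ℝ (Function.uncurry u) (t₀, t₀) (0, 1) = d :=
    (aux_hasDerivAt_x u hC1 t₀ t₀).deriv.symm
  -- t-partial derivative at the diagonal is -d
  have hct : fderiv ℝ (Function.uncurry u) (t₀, t₀) (1, 0) = -d := by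
    have hdiag : HasDerivAt (fun s => u s s)
        (fderiv ℝ (Function.uncurry u) (t₀, t₀) (1, 1)) t₀ :=
      aux_hasDerivAt_diag u hC1 t₀
    have hzero : (fun s : ℝ => u s s) =ᶠ[𝓝 t₀] fun _ => (0 : ℝ) := by
      filter_upwards [hIoo] with s hs using hbct s hs
    have h0 : HasDerivAt (fun _ : ℝ => (0 : ℝ))
        (fderiv ℝ (Function.uncurry u) (t₀, t₀) (1, 1)) t₀ :=
      hdiag.congr_of_eventuallyEq hzero.symm
    have h1 : fderiv ℝ (Function.uncurry u) (t₀, t₀) (1, 1) = 0 := by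
      have := h0.deriv
      simpa using this.symm
    have hsum : ((1 : ℝ), (1 : ℝ)) = ((1 : ℝ), (0 : ℝ)) + ((0 : ℝ), (1 : ℝ)) := by
      simp [Prod.ext_iff]
    rw [hsum, map_add, hdval] at h1
    linarith
  have hNlim : Tendsto N (𝓝[≠] t₀) (𝓝 (-d ^ 2)) := by
    rw [← nhdsLT_sup_nhdsGT, tendsto_sup]
    constructor
    · -- from the left : s < t₀, min s t₀ = s
      have hEq : ∀ᶠ s in 𝓝[<] t₀, -((u t₀ s - u t₀ t₀) / (s - t₀)) *
          deriv (u s) s = N s := by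
        filter_upwards [self_mem_nhdsWithin,
          nhdsWithin_le_nhds (a := t₀) (s := Iio t₀) hIoo] with s hs hs'
        have hmin : min s t₀ = s := min_eq_left (le_of_lt hs)
        have hss : u s s = 0 := hbct s hs'
        have h1 : s - t₀ ≠ 0 := sub_ne_zero.mpr (ne_of_lt hs)
        have h2 : t₀ - s ≠ 0 := sub_ne_zero.mpr (ne_of_gt hs)
        simp only [hN, hmin, hss, zero_mul, sub_zero, hut00]
        field_simp
        ring
      apply Tendsto.congr' hEq
      have hA : Tendsto (fun s => (u t₀ s - u t₀ t₀) / (s - t₀)) (𝓝[<] t₀) (𝓝 d) := by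
        have h := hasDerivAt_iff_tendsto_slope.mp hdx
        have he : slope (u t₀) t₀ = fun s => (u t₀ s - u t₀ t₀) / (s - t₀) := by
          ext s; simp [slope_def_field]
        rw [he] at h
        exact h.mono_left (nhdsWithin_mono t₀ (fun x hx => ne_of_lt hx))
      have hB : Tendsto (fun s => deriv (u s) s) (𝓝[<] t₀) (𝓝 d) := by
        have hc : Continuous (fun s : ℝ => deriv (u s) s) :=
          (aux_contDx u hC1).comp (continuous_id.prodMk continuous_id)
        have := hc.continuousAt (x := t₀)
        exact this.mono_left nhdsWithin_le_nhds
      have := (hA.neg.mul hB)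
      convert this using 2
      ring
    · -- from the right : s > t₀, min s t₀ = t₀
      have hEq : ∀ᶠ s in 𝓝[>] t₀, (u s t₀ - u t₀ t₀) / (s - t₀) * d = N s := by
        filter_upwards [self_mem_nhdsWithin] with s hs
        have hmin : min s t₀ = t₀ := min_eq_right (le_of_lt hs)
        have h1 : s - t₀ ≠ 0 := sub_ne_zero.mpr (ne_of_gt hs)
        have h2 : t₀ - s ≠ 0 := sub_ne_zero.mpr (ne_of_lt hs)
        simp only [hN, hmin, hut00, zero_mul, zero_sub, sub_zero, ← hdd]
        field_simp
        ring
      apply Tendsto.congr' hEq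
      have hpsi : HasDerivAt (fun s => u s t₀) (-d) t₀ := by
        have := aux_hasDerivAt_t u hC1 t₀ t₀
        rwa [hct] at this
      have hA : Tendsto (fun s => (u s t₀ - u t₀ t₀) / (s - t₀))
          (𝓝[>] t₀) (𝓝 (-d)) := by
        have h := hasDerivAt_iff_tendsto_slope.mp hpsi
        have he : slope (fun s => u s t₀) t₀ = fun s => (u s t₀ - u t₀ t₀) / (s - t₀) := by
          ext s; simp [slope_def_field]
        rw [he] at h
        exact h.mono_left (nhdsWithin_mono t₀ (fun x hx => ne_of_gt hx))
      have := hA.mul_const d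
      convert this using 2
      ring
  -- combine: the slope of lam equals N / I eventually
  have hIne : ∀ᶠ s in 𝓝[≠] t₀, I s ≠ 0 := by
    have := hItend.eventually (eventually_ne_nhds one_ne_zero)
    exact this
  have hEq2 : ∀ᶠ s in 𝓝[≠] t₀, N s / I s = (lam s - lam t₀) / (s - t₀) := by
    filter_upwards [self_mem_nhdsWithin, hIne,
      nhdsWithin_le_nhds (a := t₀) (s := {t₀}ᶜ) hIoo] with s hs hI0 hs'
    have hne : s - t₀ ≠ 0 := sub_ne_zero.mpr hs
    have hne' : t₀ - s ≠ 0 := sub_ne_zero.mpr (Ne.symm hs)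
    have hk := key s hs'
    have hNs : N s = ((lam t₀ - lam s) * I s) / (t₀ - s) := by
      simp only [hN]
      rw [hk]
    rw [hNs]
    field_simp
    ring
  have hfinal : Tendsto (fun s => (lam s - lam t₀) / (s - t₀)) (𝓝[≠] t₀)
      (𝓝 (-d ^ 2)) := by
    have h := (hNlim.div hItend one_ne_zero)
    rw [div_one] at h
    exact h.congr' hEq2
  exact tendsto_nhds_unique hslope hfinal
end

section
/- Unique sign change of the endpoint variation: fix t ∈ (a,b) and write u̇(x) := ∂ₜu(t,x). Assume in addition that u(t,x) > 0 for all x ∈ (a,t), that λ'(t) < 0, that ∫_a^t u(t,x) u̇(x) dx = 0, and that u̇(x)/u(t,x) → ∞ as x → t from the left. Then there exists a unique t₀ ∈ (a,t) such that u̇(x) < 0 for all x ∈ (a,t₀) and u̇(x) > 0 for all x ∈ (t₀,t). -/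
set_option maxHeartbeats 1600000

open MeasureTheory Set

/-- unique sign change of the endpoint variation `u̇ = ∂ₜu(t,·)`:
it is negative on `(a,t₀)` and positive on `(t₀,t)` for a unique `t₀ ∈ (a,t)`. -/
theorem endpoint_variation_unique_sign_change
    (V : ℝ → ℝ) (hV : ContDiff ℝ 1 V)
    (a b : ℝ) (hab : a < b)
    (lam : ℝ → ℝ) (hlam : ∀ t ∈ Set.Ioo a b, DifferentiableAt ℝ lam t)
    (u : ℝ → ℝ → ℝ)
    (hC1 : ContDiff ℝ 1 (Function.uncurry u))
    (huxx : Continuous (fun p : ℝ × ℝ => deriv (deriv (u p.1)) p.2))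
    (hutx : Continuous (fun p : ℝ × ℝ => deriv (fun s => deriv (u s) p.2) p.1))
    (htwice : ∀ t ∈ Set.Ioo a b, ContDiffOn ℝ 2 (u t) (Set.Icc a t))
    (heq : ∀ t ∈ Set.Ioo a b, ∀ x ∈ Set.Ioo a t,
      -(deriv (deriv (u t)) x) + V x * u t x = lam t * u t x)
    (hbca : ∀ t ∈ Set.Ioo a b, u t a = 0)
    (hbct : ∀ t ∈ Set.Ioo a b, u t t = 0)
    (hnorm : ∀ t ∈ Set.Ioo a b, (∫ x in a..t, (u t x) ^ 2) = 1)
    (t : ℝ) (ht : t ∈ Set.Ioo a b)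
    (hpos : ∀ x ∈ Set.Ioo a t, 0 < u t x)
    (hlam' : deriv lam t < 0)
    (horth : (∫ x in a..t, u t x * deriv (fun s => u s x) t) = 0)
    (hratio : Filter.Tendsto (fun x => deriv (fun s => u s x) t / u t x)
      (nhdsWithin t (Set.Iio t)) Filter.atTop) :
    ∃! t₀ : ℝ, t₀ ∈ Set.Ioo a t ∧
      (∀ x ∈ Set.Ioo a t₀, deriv (fun s => u s x) t < 0) ∧
      (∀ x ∈ Set.Ioo t₀ t, 0 < deriv (fun s => u s x) t) := by
  have hat : a < t := ht.1
  have htb : t < b := ht.2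
  set U := Function.uncurry u with hU
  have hUc : Continuous U := hC1.continuous
  have hUd : Differentiable ℝ U := hC1.differentiable one_ne_zero
  have hfc : Continuous (fderiv ℝ U) := (contDiff_one_iff_fderiv.mp hC1).2
  set P : ℝ × ℝ → ℝ := fun p => fderiv ℝ U p (1, 0) with hPdef
  set Q : ℝ × ℝ → ℝ := fun p => fderiv ℝ U p (0, 1) with hQdef
  have hPc : Continuous P := hfc.clm_apply continuous_const
  have hQc : Continuous Q := hfc.clm_apply continuous_const
  -- partial derivative in the first variable
  have hP_deriv : ∀ (s x : ℝ), HasDerivAt (fun s' => u s' x) (P (s, x)) s := by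
    intro s x
    have h1 : HasDerivAt (fun s' : ℝ => (s', x)) ((1 : ℝ), (0 : ℝ)) s :=
      HasDerivAt.prodMk (hasDerivAt_id s) (hasDerivAt_const s x)
    have h2 := ((hUd (s, x)).hasFDerivAt).comp_hasDerivAt s h1
    exact h2
  -- partial derivative in the second variable
  have hQ_deriv : ∀ (s x : ℝ), HasDerivAt (u s) (Q (s, x)) x := by
    intro s x
    have h1 : HasDerivAt (fun x' : ℝ => (s, x')) ((0 : ℝ), (1 : ℝ)) x :=
      HasDerivAt.prodMk (hasDerivAt_const x s) (hasDerivAt_id x)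
    have h2 := ((hUd (s, x)).hasFDerivAt).comp_hasDerivAt x h1
    exact h2
  set v : ℝ → ℝ := fun x => deriv (fun s => u s x) t with hvdef
  have hv_eq : ∀ x, v x = P (t, x) := fun x => (hP_deriv t x).deriv
  have hv_deriv : ∀ x, HasDerivAt (fun s => u s x) (v x) t := fun x => (hv_eq x) ▸ hP_deriv t x
  have hv_cont : Continuous v := by
    have h1 : Continuous fun x => P (t, x) :=
      hPc.comp (continuous_const.prodMk continuous_id)
    have h2 : v = fun x => P (t, x) := funext hv_eq
    rw [h2]; exact h1
  have hucont2 : ∀ s, Continuous (u s) := by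
    intro s
    have : Continuous fun x => U (s, x) := hUc.comp (continuous_const.prodMk continuous_id)
    simpa [U, Function.uncurry] using this
  have hQcont2 : ∀ s, Continuous (fun y => Q (s, y)) := fun s =>
    hQc.comp (continuous_const.prodMk continuous_id)
  have hQint : ∀ (s x₁ x₂ : ℝ), IntervalIntegrable (fun y => Q (s, y)) volume x₁ x₂ :=
    fun s x₁ x₂ => (hQcont2 s).intervalIntegrable _ _
  -- fundamental theorem of calculus in the space variable
  have hFTC : ∀ (s x₁ x₂ : ℝ), u s x₂ - u s x₁ = ∫ y in x₁..x₂, Q (s, y) := by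
    intro s x₁ x₂
    exact (intervalIntegral.integral_eq_sub_of_hasDerivAt
      (fun y _ => hQ_deriv s y) (hQint s x₁ x₂)).symm
  -- second space derivative via the ODE
  have hdd : ∀ r ∈ Set.Ioo a b, ∀ y ∈ Set.Ioo a r,
      HasDerivAt (fun z => Q (r, z)) (V y * u r y - lam r * u r y) y := by
    intro r hr y hy
    have h2 : ContDiffOn ℝ 2 (u r) (Set.Ioo a r) := (htwice r hr).mono Set.Ioo_subset_Icc_self
    have h3 : ContDiffOn ℝ 1 (deriv (u r)) (Set.Ioo a r) :=
      h2.deriv_of_isOpen isOpen_Ioo (by norm_num)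
    have h4 : DifferentiableAt ℝ (deriv (u r)) y :=
      ((h3.differentiableOn one_ne_zero) y hy).differentiableAt (isOpen_Ioo.mem_nhds hy)
    have h5 : HasDerivAt (deriv (u r)) (deriv (deriv (u r)) y) y := h4.hasDerivAt
    have hval : deriv (deriv (u r)) y = V y * u r y - lam r * u r y := by
      have := heq r hr y hy; linarith
    have hfun : deriv (u r) = fun z => Q (r, z) := funext fun z => (hQ_deriv r z).deriv
    rw [hval, hfun] at h5
    exact h5
  -- the Wronskian-type identity
  have key5 : ∀ s ∈ Set.Ioo a b, ∀ x ∈ Set.Ioo a t, x < s →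
      u t x * Q (s, x) - Q (t, x) * u s x
        = (lam t - lam s) * ∫ y in a..x, u t y * u s y := by
    intro s hs x hx hxs
    have hW : ∀ y ∈ Set.Ioo a x, HasDerivAt (fun z => u t z * Q (s, z) - Q (t, z) * u s z)
        ((lam t - lam s) * (u t y * u s y)) y := by
      intro y hy
      have hy1 : y ∈ Set.Ioo a t := ⟨hy.1, hy.2.trans hx.2⟩
      have hy2 : y ∈ Set.Ioo a s := ⟨hy.1, hy.2.trans hxs⟩
      have d1 := (hQ_deriv t y).mul (hdd s hs y hy2)
      have d2 := (hdd t ht y hy1).mul (hQ_deriv s y)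
      have d3 := d1.sub d2
      convert d3 using 1
      · rfl
      · rfl
      · rfl
      ring
    have hcont : ContinuousOn (fun z => u t z * Q (s, z) - Q (t, z) * u s z)
        (Set.Icc a x) :=
      (((hucont2 t).mul (hQcont2 s)).sub ((hQcont2 t).mul (hucont2 s))).continuousOn
    have hint : IntervalIntegrable (fun y => (lam t - lam s) * (u t y * u s y)) volume a x :=
      (continuous_const.mul ((hucont2 t).mul (hucont2 s))).intervalIntegrable _ _
    have hkey := intervalIntegral.integral_eq_sub_of_hasDerivAt_of_le (le_of_lt hx.1)
      hcont (fun y hy => hW y hy) hint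
    rw [intervalIntegral.integral_const_mul] at hkey
    have ha1 : u t a = 0 := hbca t ht
    have ha2 : u s a = 0 := hbca s hs
    rw [ha1, ha2] at hkey
    simpa using hkey.symm
  -- compact bounds
  set K : Set (ℝ × ℝ) := Set.Icc (t - 1) (t + 1) ×ˢ Set.Icc a t with hKdef
  have hKcomp : IsCompact K := isCompact_Icc.prod isCompact_Icc
  have hKconv : Convex ℝ K := (convex_Icc _ _).prod (convex_Icc _ _)
  have htK : (t : ℝ) ∈ Set.Icc (t - 1) (t + 1) := by constructor <;> linarith
  obtain ⟨M₁, hM₁⟩ := hKcomp.exists_bound_of_continuousOn hUc.continuousOn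
  obtain ⟨MQ, hMQ⟩ := hKcomp.exists_bound_of_continuousOn hQc.continuousOn
  obtain ⟨C₀, hC₀⟩ := hKcomp.exists_bound_of_continuousOn hfc.continuousOn
  have hM₁0 : 0 ≤ M₁ := le_trans (norm_nonneg _) (hM₁ (t, a) ⟨htK, ⟨le_refl a, le_of_lt hat⟩⟩)
  have hMQ0 : 0 ≤ MQ := le_trans (norm_nonneg _) (hMQ (t, a) ⟨htK, ⟨le_refl a, le_of_lt hat⟩⟩)
  have hC₀0 : 0 ≤ C₀ := le_trans (norm_nonneg _) (hC₀ (t, a) ⟨htK, ⟨le_refl a, le_of_lt hat⟩⟩)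
  -- local Lipschitz estimate in the time variable
  have hulip : ∀ s ∈ Set.Icc (t - 1) (t + 1), ∀ y ∈ Set.Icc a t,
      |u s y - u t y| ≤ C₀ * |s - t| := by
    intro s hs y hy
    have h1 := hKconv.norm_image_sub_le_of_norm_fderiv_le (fun p _ => hUd p) hC₀
      (⟨htK, hy⟩ : ((t, y) : ℝ × ℝ) ∈ K) (⟨hs, hy⟩ : ((s, y) : ℝ × ℝ) ∈ K)
    have h2 : U (s, y) - U (t, y) = u s y - u t y := rfl
    have h3 : ‖((s, y) : ℝ × ℝ) - (t, y)‖ = |s - t| := by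
      have h4 : ((s, y) : ℝ × ℝ) - (t, y) = (s - t, 0) := by simp [Prod.ext_iff]
      rw [h4, Prod.norm_def]
      simp only [Real.norm_eq_abs, norm_zero]
      exact max_eq_left (abs_nonneg _)
    rw [h2, h3] at h1
    exact h1
  -- continuity of the auxiliary integral in the time variable
  have hA : ∀ x ∈ Set.Ioo a t, Filter.Tendsto (fun s => ∫ y in a..x, u t y * u s y)
      (nhds t) (nhds (∫ y in a..x, u t y * u t y)) := by
    intro x hx
    apply intervalIntegral.tendsto_integral_filter_of_dominated_convergence
      (bound := fun _ => M₁ * M₁)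
    · filter_upwards with s
      exact (((hucont2 t).mul (hucont2 s)).aestronglyMeasurable)
    · have hmem : Set.Icc (t - 1) (t + 1) ∈ nhds t := Icc_mem_nhds (by linarith) (by linarith)
      filter_upwards [hmem] with s hs
      filter_upwards with y hy
      have hyI : y ∈ Set.Icc a t := by
        rcases hy with ⟨h1, h2⟩
        rw [min_eq_left (le_of_lt hx.1)] at h1
        rw [max_eq_right (le_of_lt hx.1)] at h2
        exact ⟨le_of_lt h1, h2.trans (le_of_lt hx.2)⟩
      have b1 : |u t y| ≤ M₁ := by
        simpa [hU, Real.norm_eq_abs] using hM₁ (t, y) ⟨htK, hyI⟩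
      have b2 : |u s y| ≤ M₁ := by
        simpa [hU, Real.norm_eq_abs] using hM₁ (s, y) ⟨hs, hyI⟩
      calc ‖u t y * u s y‖ = |u t y| * |u s y| := by rw [Real.norm_eq_abs, abs_mul]
        _ ≤ M₁ * M₁ := mul_le_mul b1 b2 (abs_nonneg _) hM₁0
    · exact intervalIntegrable_const
    · filter_upwards with y hy
      exact (continuous_const.mul
        (hUc.comp (continuous_id.prodMk continuous_const))).tendsto t
  -- slope of lam
  have hLslope : Filter.Tendsto (slope lam t) (nhdsWithin t {t}ᶜ) (nhds (deriv lam t)) :=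
    hasDerivAt_iff_tendsto_slope.mp (hlam t ht).hasDerivAt
  -- the candidate derivative of v
  set g : ℝ → ℝ := fun x =>
    (-(deriv lam t) * (∫ y in a..x, u t y * u t y) + Q (t, x) * v x) / u t x with hgdef
  -- pointwise identity for the slope of Q in the time variable
  have hslope_id : ∀ x ∈ Set.Ioo a t, ∀ s, x < s → s < b → s ≠ t →
      (Q (s, x) - Q (t, x)) / (s - t)
        = ((lam t - lam s) / (s - t) * (∫ y in a..x, u t y * u s y)
            + Q (t, x) * ((u s x - u t x) / (s - t))) / u t x := by
    intro x hx s hxs hsb hst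
    have hs : s ∈ Set.Ioo a b := ⟨hx.1.trans hxs, hsb⟩
    have h1 := key5 s hs x hx hxs
    have hux : u t x ≠ 0 := (hpos x hx).ne'
    have hst' : s - t ≠ 0 := sub_ne_zero.mpr hst
    have hid : u t x * (Q (s, x) - Q (t, x))
        = (lam t - lam s) * (∫ y in a..x, u t y * u s y) + Q (t, x) * (u s x - u t x) := by
      linear_combination h1
    field_simp
    linear_combination hid
  -- convergence of the slope of Q in the time variable
  have key6 : ∀ x ∈ Set.Ioo a t, Filter.Tendsto
      (fun s => (Q (s, x) - Q (t, x)) / (s - t)) (nhdsWithin t {t}ᶜ) (nhds (g x)) := by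
    intro x hx
    have T1 : Filter.Tendsto (fun s => (lam t - lam s) / (s - t)) (nhdsWithin t {t}ᶜ)
        (nhds (-(deriv lam t))) := by
      apply hLslope.neg.congr
      intro s
      rw [slope_def_field]
      ring
    have T2 : Filter.Tendsto (fun s => ∫ y in a..x, u t y * u s y) (nhdsWithin t {t}ᶜ)
        (nhds (∫ y in a..x, u t y * u t y)) := (hA x hx).mono_left nhdsWithin_le_nhds
    have T3 : Filter.Tendsto (fun s => (u s x - u t x) / (s - t)) (nhdsWithin t {t}ᶜ)
        (nhds (v x)) := by
      apply (hasDerivAt_iff_tendsto_slope.mp (hv_deriv x)).congr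
      intro s
      simp [slope_def_field]
    have T4 := ((T1.mul T2).add (Filter.Tendsto.const_mul (Q (t, x)) T3)).div_const (u t x)
    have hmem : Set.Ioo x b ∈ nhdsWithin t ({t}ᶜ : Set ℝ) :=
      nhdsWithin_le_nhds (Ioo_mem_nhds hx.2 htb)
    apply T4.congr'
    filter_upwards [hmem, self_mem_nhdsWithin] with s hsIoo hst
    exact (hslope_id x hx s hsIoo.1 hsIoo.2 hst).symm
  -- eventual Lipschitz bound for lam
  have hKlam : ∀ᶠ s in nhdsWithin t ({t}ᶜ : Set ℝ),
      |lam t - lam s| ≤ (|deriv lam t| + 1) * |s - t| := by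
    have h1 : ∀ᶠ s in nhdsWithin t ({t}ᶜ : Set ℝ), |slope lam t s| < |deriv lam t| + 1 :=
      hLslope.abs.eventually_lt_const (by linarith [abs_nonneg (deriv lam t)])
    filter_upwards [h1, self_mem_nhdsWithin] with s hs hst
    have hst' : s - t ≠ 0 := sub_ne_zero.mpr hst
    have h2 : slope lam t s = (lam s - lam t) / (s - t) := slope_def_field lam t s
    rw [h2, abs_div, div_lt_iff₀ (abs_pos.mpr hst')] at hs
    rw [abs_sub_comm]
    exact le_of_lt hs
  -- integral identity for v
  have key7 : ∀ x₁ ∈ Set.Ioo a t, ∀ x₂ ∈ Set.Ioo a t,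
      v x₂ - v x₁ = ∫ y in x₁..x₂, g y := by
    intro x₁ h₁ x₂ h₂
    have hsub : Set.uIoc x₁ x₂ ⊆ Set.Ioo a t := by
      intro y hy
      exact ⟨lt_of_lt_of_le (lt_min h₁.1 h₂.1) (le_of_lt hy.1),
        lt_of_le_of_lt hy.2 (max_lt h₁.2 h₂.2)⟩
    have hsubIcc : Set.uIcc x₁ x₂ ⊆ Set.Ioo a t := by
      intro y hy
      exact ⟨lt_of_lt_of_le (lt_min h₁.1 h₂.1) hy.1, lt_of_le_of_lt hy.2 (max_lt h₁.2 h₂.2)⟩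
    have hconv : Filter.Tendsto (fun s => ∫ y in x₁..x₂, (Q (s, y) - Q (t, y)) / (s - t))
        (nhdsWithin t ({t}ᶜ : Set ℝ)) (nhds (∫ y in x₁..x₂, g y)) := by
      apply intervalIntegral.tendsto_integral_filter_of_dominated_convergence
        (bound := fun y => ((|deriv lam t| + 1) * (M₁ * M₁ * (t - a)) + MQ * C₀) / u t y)
      · filter_upwards with s
        exact (((hQcont2 s).sub (hQcont2 t)).div_const _).aestronglyMeasurable
      · have hmem1 : Set.Icc (t - 1) (t + 1) ∈ nhdsWithin t ({t}ᶜ : Set ℝ) :=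
          nhdsWithin_le_nhds (Icc_mem_nhds (by linarith) (by linarith))
        have hmem2 : Set.Ioo (max x₁ x₂) b ∈ nhdsWithin t ({t}ᶜ : Set ℝ) :=
          nhdsWithin_le_nhds (Ioo_mem_nhds (max_lt h₁.2 h₂.2) htb)
        filter_upwards [hmem1, hmem2, hKlam, self_mem_nhdsWithin] with s hs1 hs2 hs3 hst
        filter_upwards with y hy
        have hyO : y ∈ Set.Ioo a t := hsub hy
        have hys : y < s := lt_of_le_of_lt hy.2 hs2.1
        have hsO : s ∈ Set.Ioo a b := ⟨hyO.1.trans hys, hs2.2⟩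
        have hid1 := key5 s hsO y hyO hys
        have hid : u t y * (Q (s, y) - Q (t, y))
            = (lam t - lam s) * (∫ z in a..y, u t z * u s z)
              + Q (t, y) * (u s y - u t y) := by
          linear_combination hid1
        have hAb : |∫ z in a..y, u t z * u s z| ≤ M₁ * M₁ * (t - a) := by
          have hb1 : ∀ z ∈ Set.uIoc a y, ‖u t z * u s z‖ ≤ M₁ * M₁ := by
            intro z hz
            have hzI : z ∈ Set.Icc a t := by
              rcases hz with ⟨hz1, hz2⟩
              rw [min_eq_left (le_of_lt hyO.1)] at hz1
              rw [max_eq_right (le_of_lt hyO.1)] at hz2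
              exact ⟨le_of_lt hz1, hz2.trans (le_of_lt hyO.2)⟩
            have c1 : |u t z| ≤ M₁ := by
              simpa [hU, Real.norm_eq_abs] using hM₁ (t, z) ⟨htK, hzI⟩
            have c2 : |u s z| ≤ M₁ := by
              simpa [hU, Real.norm_eq_abs] using hM₁ (s, z) ⟨hs1, hzI⟩
            calc ‖u t z * u s z‖ = |u t z| * |u s z| := by rw [Real.norm_eq_abs, abs_mul]
              _ ≤ M₁ * M₁ := mul_le_mul c1 c2 (abs_nonneg _) hM₁0
          have hb2 := intervalIntegral.norm_integral_le_of_norm_le_const hb1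
          have hb3 : |y - a| ≤ t - a := by
            rw [abs_of_pos (by linarith [hyO.1] : (0 : ℝ) < y - a)]
            linarith [hyO.2]
          calc |∫ z in a..y, u t z * u s z| ≤ M₁ * M₁ * |y - a| := by
                simpa [Real.norm_eq_abs] using hb2
            _ ≤ M₁ * M₁ * (t - a) :=
                mul_le_mul_of_nonneg_left hb3 (mul_self_nonneg M₁)
        have hQb : |Q (t, y)| ≤ MQ := by
          simpa [Real.norm_eq_abs] using
            hMQ (t, y) ⟨htK, ⟨le_of_lt hyO.1, le_of_lt hyO.2⟩⟩
        have hub : |u s y - u t y| ≤ C₀ * |s - t| :=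
          hulip s hs1 y ⟨le_of_lt hyO.1, le_of_lt hyO.2⟩
        have hnum : u t y * |Q (s, y) - Q (t, y)|
            ≤ ((|deriv lam t| + 1) * (M₁ * M₁ * (t - a)) + MQ * C₀) * |s - t| := by
          have e1 : u t y * |Q (s, y) - Q (t, y)| = |u t y * (Q (s, y) - Q (t, y))| := by
            rw [abs_mul, abs_of_pos (hpos y hyO)]
          rw [e1, hid]
          calc |(lam t - lam s) * (∫ z in a..y, u t z * u s z)
                + Q (t, y) * (u s y - u t y)|
              ≤ |lam t - lam s| * |∫ z in a..y, u t z * u s z|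
                + |Q (t, y)| * |u s y - u t y| := by
                refine (abs_add_le _ _).trans ?_
                rw [abs_mul, abs_mul]
            _ ≤ ((|deriv lam t| + 1) * |s - t|) * (M₁ * M₁ * (t - a))
                + MQ * (C₀ * |s - t|) := by
                gcongr <;> positivity
            _ = ((|deriv lam t| + 1) * (M₁ * M₁ * (t - a)) + MQ * C₀) * |s - t| := by ring
        rw [Real.norm_eq_abs, abs_div]
        rw [div_le_div_iff₀ (abs_pos.mpr (sub_ne_zero.mpr hst)) (hpos y hyO)]
        rw [mul_comm]
        exact hnum
      · apply ContinuousOn.intervalIntegrable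
        apply ContinuousOn.div continuousOn_const ((hucont2 t).continuousOn)
        intro y hy
        exact (hpos y (hsubIcc hy)).ne'
      · filter_upwards with y hy
        exact key6 y (hsub hy)
    have hlhs : Filter.Tendsto (fun s => (u s x₂ - u s x₁ - (u t x₂ - u t x₁)) / (s - t))
        (nhdsWithin t ({t}ᶜ : Set ℝ)) (nhds (v x₂ - v x₁)) := by
      apply (hasDerivAt_iff_tendsto_slope.mp ((hv_deriv x₂).sub (hv_deriv x₁))).congr
      intro s
      simp [slope_def_field]
    have heqint : ∀ s : ℝ, (∫ y in x₁..x₂, (Q (s, y) - Q (t, y)) / (s - t))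
        = (u s x₂ - u s x₁ - (u t x₂ - u t x₁)) / (s - t) := by
      intro s
      rw [intervalIntegral.integral_div, intervalIntegral.integral_sub (hQint s x₁ x₂)
        (hQint t x₁ x₂), ← hFTC s x₁ x₂, ← hFTC t x₁ x₂]
    rw [funext heqint] at hconv
    exact tendsto_nhds_unique hlhs hconv
  -- continuity of g
  have hIcont : Continuous (fun x => ∫ y in a..x, u t y * u t y) :=
    intervalIntegral.continuous_primitive
      (fun c d => ((hucont2 t).mul (hucont2 t)).intervalIntegrable c d) a
  have hgcont : ContinuousOn g (Set.Ioo a t) := by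
    apply ContinuousOn.div
    · exact ((continuous_const.mul hIcont).add ((hQcont2 t).mul hv_cont)).continuousOn
    · exact (hucont2 t).continuousOn
    · intro y hy
      exact (hpos y hy).ne'
  -- v is differentiable with derivative g
  have hv_hasderiv : ∀ x ∈ Set.Ioo a t, HasDerivAt v (g x) x := by
    intro x hx
    set x₀ := (a + x) / 2 with hx₀def
    have hx₀ : x₀ ∈ Set.Ioo a t := ⟨by simp only [hx₀def]; linarith [hx.1],
      by simp only [hx₀def]; linarith [hx.1, hx.2]⟩
    have hmemIoo : Set.Ioo a t ∈ nhds x := Ioo_mem_nhds hx.1 hx.2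
    have hint : IntervalIntegrable g volume x₀ x := by
      apply ContinuousOn.intervalIntegrable
      apply hgcont.mono
      intro y hy
      exact ⟨lt_of_lt_of_le (lt_min hx₀.1 hx.1) hy.1, lt_of_le_of_lt hy.2 (max_lt hx₀.2 hx.2)⟩
    have hmeas : StronglyMeasurableAtFilter g (nhds x) :=
      ⟨Set.Ioo a t, hmemIoo, hgcont.aestronglyMeasurable measurableSet_Ioo⟩
    have hca : ContinuousAt g x := hgcont.continuousAt hmemIoo
    have hd := (intervalIntegral.integral_hasDerivAt_right hint hmeas hca).const_add (v x₀)
    apply hd.congr_of_eventuallyEq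
    filter_upwards [hmemIoo] with y hy
    have := key7 x₀ hx₀ y hy
    linarith
  -- the quotient w = v / u is strictly monotone on (a, t)
  have hw_deriv : ∀ x ∈ Set.Ioo a t, HasDerivAt (fun y => v y / u t y)
      ((g x * u t x - v x * Q (t, x)) / (u t x) ^ 2) x := fun x hx =>
    (hv_hasderiv x hx).div (hQ_deriv t x) (hpos x hx).ne'
  have hI_pos : ∀ x ∈ Set.Ioo a t, 0 < ∫ y in a..x, u t y * u t y := by
    intro x hx
    apply intervalIntegral.intervalIntegral_pos_of_pos_on
    · exact ((hucont2 t).mul (hucont2 t)).intervalIntegrable a x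
    · intro y hy
      have hyO : y ∈ Set.Ioo a t := ⟨hy.1, hy.2.trans hx.2⟩
      exact mul_pos (hpos y hyO) (hpos y hyO)
    · exact hx.1
  have hnum_pos : ∀ x ∈ Set.Ioo a t, 0 < (g x * u t x - v x * Q (t, x)) / (u t x) ^ 2 := by
    intro x hx
    apply div_pos
    · have hux : u t x ≠ 0 := (hpos x hx).ne'
      have h4 : g x * u t x - v x * Q (t, x)
          = -(deriv lam t) * (∫ y in a..x, u t y * u t y) := by
        rw [hgdef]
        field_simp
        ring
      rw [h4]
      exact mul_pos (neg_pos.mpr hlam') (hI_pos x hx)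
    · exact pow_pos (hpos x hx) 2
  have hw_mono : StrictMonoOn (fun y => v y / u t y) (Set.Ioo a t) := by
    apply strictMonoOn_of_deriv_pos (convex_Ioo a t)
    · intro x hx
      exact ((hw_deriv x hx).continuousAt).continuousWithinAt
    · rw [interior_Ioo]
      intro x hx
      rw [(hw_deriv x hx).deriv]
      exact hnum_pos x hx
  -- existence of a point where v is nonpositive
  have hx₁ex : ∃ x₁ ∈ Set.Ioo a t, v x₁ ≤ 0 := by
    by_contra hcon
    push_neg at hcon
    have hpos' : 0 < ∫ x in a..t, u t x * v x := by
      apply intervalIntegral.intervalIntegral_pos_of_pos_on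
      · exact ((hucont2 t).mul hv_cont).intervalIntegrable a t
      · intro y hy
        exact mul_pos (hpos y hy) (hcon y hy)
      · exact hat
    have horth' : (∫ x in a..t, u t x * v x) = 0 := horth
    rw [horth'] at hpos'
    exact lt_irrefl 0 hpos'
  -- existence of a point where v/u is at least 1
  have hx₂ex : ∃ x₂ ∈ Set.Ioo a t, 1 ≤ v x₂ / u t x₂ := by
    have h1 : ∀ᶠ x in nhdsWithin t (Set.Iio t), 1 ≤ v x / u t x :=
      hratio.eventually_ge_atTop 1
    have h2 : Set.Ioo a t ∈ nhdsWithin t (Set.Iio t) :=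
      Ioo_mem_nhdsLT_of_mem ⟨hat, le_refl t⟩
    rcases (h1.and (Filter.eventually_of_mem h2 (fun x hx => hx))).exists with ⟨x₂, hx₂1, hx₂2⟩
    exact ⟨x₂, hx₂2, hx₂1⟩
  obtain ⟨x₁, hx₁m, hx₁v⟩ := hx₁ex
  obtain ⟨x₂, hx₂m, hx₂v⟩ := hx₂ex
  have hw₁ : v x₁ / u t x₁ ≤ 0 :=
    div_nonpos_of_nonpos_of_nonneg hx₁v (le_of_lt (hpos x₁ hx₁m))
  have hx₁x₂ : x₁ < x₂ := by
    by_contra hle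
    push_neg at hle
    have hle2 : v x₂ / u t x₂ ≤ v x₁ / u t x₁ := by
      rcases eq_or_lt_of_le hle with h | h
      · rw [h]
      · exact le_of_lt (hw_mono hx₂m hx₁m h)
    linarith
  have hIccsub : Set.Icc x₁ x₂ ⊆ Set.Ioo a t := fun y hy =>
    ⟨lt_of_lt_of_le hx₁m.1 hy.1, lt_of_le_of_lt hy.2 hx₂m.2⟩
  have hwc : ContinuousOn (fun y => v y / u t y) (Set.Icc x₁ x₂) := by
    intro y hy
    exact (((hw_deriv y (hIccsub hy)).continuousAt)).continuousWithinAt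
  have h0mem : (0 : ℝ) ∈ Set.Icc (v x₁ / u t x₁) (v x₂ / u t x₂) := ⟨hw₁, by linarith⟩
  obtain ⟨t₀, ht₀mem, ht₀val⟩ := intermediate_value_Icc (le_of_lt hx₁x₂) hwc h0mem
  have ht₀O : t₀ ∈ Set.Ioo a t := hIccsub ht₀mem
  have ht₀v : v t₀ / u t t₀ = 0 := ht₀val
  -- sign of v on each side of t₀
  have hsign_neg : ∀ x ∈ Set.Ioo a t₀, v x < 0 := by
    intro x hx
    have hxO : x ∈ Set.Ioo a t := ⟨hx.1, hx.2.trans ht₀O.2⟩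
    have h2 : v x / u t x < v t₀ / u t t₀ := hw_mono hxO ht₀O hx.2
    rw [ht₀v] at h2
    have hu := hpos x hxO
    by_contra hge
    push_neg at hge
    have h3 : 0 ≤ v x / u t x := div_nonneg hge hu.le
    linarith
  have hsign_pos : ∀ x ∈ Set.Ioo t₀ t, 0 < v x := by
    intro x hx
    have hxO : x ∈ Set.Ioo a t := ⟨ht₀O.1.trans hx.1, hx.2⟩
    have h2 : v t₀ / u t t₀ < v x / u t x := hw_mono ht₀O hxO hx.1
    rw [ht₀v] at h2
    have hu := hpos x hxO
    by_contra hge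
    push_neg at hge
    have h3 : v x / u t x ≤ 0 := div_nonpos_of_nonpos_of_nonneg hge hu.le
    linarith
  refine ⟨t₀, ⟨ht₀O, fun x hx => hsign_neg x hx, fun x hx => hsign_pos x hx⟩, ?_⟩
  rintro t₁ ⟨ht₁O, hneg₁, hpos₁⟩
  by_contra hne
  rcases lt_or_gt_of_ne hne with h | h
  · have hx1 : t₁ < (t₁ + t₀) / 2 := by linarith
    have hx2 : (t₁ + t₀) / 2 < t₀ := by linarith
    have hA1 : 0 < v ((t₁ + t₀) / 2) := hpos₁ _ ⟨hx1, hx2.trans ht₀O.2⟩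
    have hB1 : v ((t₁ + t₀) / 2) < 0 := hsign_neg _ ⟨ht₁O.1.trans hx1, hx2⟩
    linarith
  · have hx1 : t₀ < (t₀ + t₁) / 2 := by linarith
    have hx2 : (t₀ + t₁) / 2 < t₁ := by linarith
    have hA1 : 0 < v ((t₀ + t₁) / 2) := hsign_pos _ ⟨hx1, hx2.trans ht₁O.2⟩
    have hB1 : v ((t₀ + t₁) / 2) < 0 := hneg₁ _ ⟨ht₀O.1.trans hx1, hx2⟩
    linarith
end
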